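/- arXiv:1606.07602 — 2 statements merged into one kernel-verified Lean document; each statement's English description precedes it below -/
import Mathlib

section
/- Let A be a k × ℓ transformation matrix with k ≥ 2 and ℓ ≥ 2. Then there exists a unique copula C_A with [A](C_A) = C_A, and for every copula D the iterates [A]^r(D) converge to C_A in the modified Sobolev norm: ‖[A]^r(D) − C_A‖_S → 0 as r → ∞. -/
open Set

noncomputable section

/-- A (bivariate) copula, as a function `C : ℝ × ℝ → ℝ` whose defining properties are imposed
on the unit square `[0,1]²`: `C(u,0) = C(0,v) = 0`, `C(u,1) = u`, `C(1,v) = v`, and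
2-increasingness. -/
def IsCopula (C : ℝ → ℝ → ℝ) : Prop :=
  (∀ u ∈ Icc (0:ℝ) 1, C u 0 = 0) ∧
  (∀ v ∈ Icc (0:ℝ) 1, C 0 v = 0) ∧
  (∀ u ∈ Icc (0:ℝ) 1, C u 1 = u) ∧
  (∀ v ∈ Icc (0:ℝ) 1, C 1 v = v) ∧
  (∀ u₁ u₂ v₁ v₂ : ℝ, u₁ ∈ Icc (0:ℝ) 1 → u₂ ∈ Icc (0:ℝ) 1 → v₁ ∈ Icc (0:ℝ) 1 →
    v₂ ∈ Icc (0:ℝ) 1 → u₁ ≤ u₂ → v₁ ≤ v₂ →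
    0 ≤ C u₂ v₂ - C u₂ v₁ - C u₁ v₂ + C u₁ v₁)

/-- A `k × ℓ` transformation matrix: nonnegative entries summing to `1`, every row and every
column containing a nonzero entry.  (The index `i : Fin k` is the column index and
`j : Fin ℓ` is the row index.) -/
def IsTransfMatrix {k ℓ : ℕ} (a : Fin k → Fin ℓ → ℝ) : Prop :=
  (∀ i j, 0 ≤ a i j) ∧ (∑ i, ∑ j, a i j = 1) ∧
  (∀ j, ∃ i, a i j ≠ 0) ∧ (∀ i, ∃ j, a i j ≠ 0)

/-- `pP a m` is `p_m`: the sum of the entries in the first `m` columns of `a`. -/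
def pP {k ℓ : ℕ} (a : Fin k → Fin ℓ → ℝ) (m : ℕ) : ℝ :=
  ∑ i : Fin k, if (i : ℕ) < m then ∑ j, a i j else 0

/-- `qQ a m` is `q_m`: the sum of the entries in the first `m` rows of `a`. -/
def qQ {k ℓ : ℕ} (a : Fin k → Fin ℓ → ℝ) (m : ℕ) : ℝ :=
  ∑ j : Fin ℓ, if (j : ℕ) < m then ∑ i, a i j else 0

/-- `F_i(u) = min(1, (u − p_{i−1})/Δp_i) · 𝟙_{(p_{i−1},∞)}(u)`, the uniform distribution
function on `[p_{i−1}, p_i]` (here `i : Fin k` denotes the `(i+1)`-st column, so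
`p_{i−1} = pP a i` and `p_i = pP a (i+1)`). -/
def Fdist {k ℓ : ℕ} (a : Fin k → Fin ℓ → ℝ) (i : Fin k) (u : ℝ) : ℝ :=
  if pP a (i : ℕ) < u then min 1 ((u - pP a (i : ℕ)) / (pP a ((i : ℕ) + 1) - pP a (i : ℕ)))
  else 0

/-- `G_j(v) = min(1, (v − q_{j−1})/Δq_j) · 𝟙_{(q_{j−1},∞)}(v)`. -/
def Gdist {k ℓ : ℕ} (a : Fin k → Fin ℓ → ℝ) (j : Fin ℓ) (v : ℝ) : ℝ :=
  if qQ a (j : ℕ) < v then min 1 ((v - qQ a (j : ℕ)) / (qQ a ((j : ℕ) + 1) - qQ a (j : ℕ)))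
  else 0

/-- The patching operator `[A]`: `[A](C)(u,v) = Σ_i Σ_j a_{ij} C(F_i(u), G_j(v))`. -/
def patch {k ℓ : ℕ} (a : Fin k → Fin ℓ → ℝ) (C : ℝ → ℝ → ℝ) : ℝ → ℝ → ℝ :=
  fun u v => ∑ i, ∑ j, a i j * C (Fdist a i u) (Gdist a j v)

/-- First partial derivative `∂₁C` (defined via `deriv`, which agrees a.e. with the
almost-everywhere existing partial derivative of a copula). -/
def d1 (C : ℝ → ℝ → ℝ) (u v : ℝ) : ℝ := deriv (fun x => C x v) u

/-- Second partial derivative `∂₂C`. -/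
def d2 (C : ℝ → ℝ → ℝ) (u v : ℝ) : ℝ := deriv (fun y => C u y) v

/-- `‖C‖₁² = ∫₀¹∫₀¹ |∂₁C(u,v)|² du dv`. -/
def sobSq1 (C : ℝ → ℝ → ℝ) : ℝ := ∫ v in (0:ℝ)..1, ∫ u in (0:ℝ)..1, (d1 C u v) ^ 2

/-- `‖C‖₂² = ∫₀¹∫₀¹ |∂₂C(u,v)|² du dv`. -/
def sobSq2 (C : ℝ → ℝ → ℝ) : ℝ := ∫ v in (0:ℝ)..1, ∫ u in (0:ℝ)..1, (d2 C u v) ^ 2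

/-- The modified Sobolev norm `‖C‖_S = (‖C‖₁² + ‖C‖₂²)^{1/2}`. -/
def sobNorm (C : ℝ → ℝ → ℝ) : ℝ := Real.sqrt (sobSq1 C + sobSq2 C)

/-- Pointwise difference of two bivariate functions. -/
def csub (C D : ℝ → ℝ → ℝ) : ℝ → ℝ → ℝ := fun u v => C u v - D u v

/-- The `*`-product of copulas: `(C*D)(u,v) = ∫₀¹ ∂₂C(u,t) ∂₁D(t,v) dt`. -/
def cstar (C D : ℝ → ℝ → ℝ) : ℝ → ℝ → ℝ :=
  fun u v => ∫ t in (0:ℝ)..1, d2 C u t * d1 D t v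

/-- Transpose of a copula: `C^t(u,v) = C(v,u)`. -/
def ctransp (C : ℝ → ℝ → ℝ) : ℝ → ℝ → ℝ := fun u v => C v u

/-- `C` is left invertible: `C^t * C = M` on `[0,1]²`, where `M(u,v) = min(u,v)`. -/
def LeftInvertibleC (C : ℝ → ℝ → ℝ) : Prop :=
  ∀ u ∈ Icc (0:ℝ) 1, ∀ v ∈ Icc (0:ℝ) 1, cstar (ctransp C) C u v = min u v

/-- `C` is right invertible: `C * C^t = M` on `[0,1]²`. -/
def RightInvertibleC (C : ℝ → ℝ → ℝ) : Prop :=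
  ∀ u ∈ Icc (0:ℝ) 1, ∀ v ∈ Icc (0:ℝ) 1, cstar C (ctransp C) u v = min u v

namespace Stmt13Aux
open Filter MeasureTheory Set

/-! ### Generic analysis helpers -/

lemma abs_deriv_le {f : ℝ → ℝ} {u K : ℝ} (hK : 0 ≤ K) {s : Set ℝ} (hs : s ∈ nhds u)
    (hf : ∀ x ∈ s, ∀ y ∈ s, |f x - f y| ≤ K * |x - y|) : |deriv f u| ≤ K := by
  by_cases h : DifferentiableAt ℝ f u
  · have h' := h.hasDerivAt
    rw [hasDerivAt_iff_tendsto_slope] at h'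
    have hev : ∀ᶠ x in nhdsWithin u {u}ᶜ, |slope f u x| ≤ K := by
      filter_upwards [nhdsWithin_le_nhds hs, self_mem_nhdsWithin] with x hx hx'
      have hxu : x ≠ u := hx'
      have : |f x - f u| ≤ K * |x - u| := hf x hx u (mem_of_mem_nhds hs)
      rw [slope_def_field]
      rw [div_eq_mul_inv, abs_mul, abs_inv]
      calc |f x - f u| * |x - u|⁻¹ ≤ (K * |x - u|) * |x - u|⁻¹ :=
            mul_le_mul_of_nonneg_right this (by positivity)
          _ = K := by
            rw [mul_assoc, mul_inv_cancel₀ (by simpa [sub_eq_zero] using hxu), mul_one]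
    exact le_of_tendsto h'.abs hev
  · rw [deriv_zero_of_not_differentiableAt h]; simpa using hK

lemma deriv_comp_affine (g : ℝ → ℝ) {c : ℝ} (hc : c ≠ 0) (b u : ℝ) :
    deriv (fun x => g ((x - b) / c)) u = deriv g ((u - b) / c) / c := by
  by_cases hg : DifferentiableAt ℝ g ((u - b) / c)
  · have haff : HasDerivAt (fun x : ℝ => (x - b) / c) (1 / c) u := by
      simpa using (((hasDerivAt_id u).sub_const b).div_const c)
    have hcomp : HasDerivAt (fun x => g ((x - b) / c)) (deriv g ((u - b) / c) * (1 / c)) u :=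
      hg.hasDerivAt.comp u haff
    rw [hcomp.deriv]
    ring
  · have hF : ¬ DifferentiableAt ℝ (fun x => g ((x - b) / c)) u := by
      intro hF
      apply hg
      have haff : DifferentiableAt ℝ (fun y : ℝ => c * y + b) ((u - b) / c) := by
        fun_prop
      have hval : c * ((u - b) / c) + b = u := by field_simp; ring
      have hF' : DifferentiableAt ℝ (fun x => g ((x - b) / c)) (c * ((u - b) / c) + b) := by
        rwa [hval]
      have hcomp := hF'.comp ((u - b) / c) haff
      have heq : ((fun x => g ((x - b) / c)) ∘ fun y : ℝ => c * y + b) = g := by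
        funext y
        simp only [Function.comp]
        rw [add_sub_cancel_right, mul_div_cancel_left₀ _ hc]
      rwa [heq] at hcomp
    rw [deriv_zero_of_not_differentiableAt hg, deriv_zero_of_not_differentiableAt hF, zero_div]

lemma II_of_bound {f : ℝ → ℝ} {A B M : ℝ} (hAB : A ≤ B) (hm : Measurable f)
    (hb : ∀ x ∈ Ioo A B, |f x| ≤ M) : IntervalIntegrable f MeasureTheory.volume A B := by
  rw [intervalIntegrable_iff_integrableOn_Ioo_of_le hAB]
  apply MeasureTheory.Integrable.mono' (g := fun _ => M)
  · exact MeasureTheory.integrableOn_const measure_Ioo_lt_top.ne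
  · exact hm.aestronglyMeasurable.restrict
  · rw [MeasureTheory.ae_restrict_iff' measurableSet_Ioo]
    filter_upwards with x hx
    simpa [Real.norm_eq_abs] using hb x hx

lemma integral_congr_Ioo {f g : ℝ → ℝ} {A B : ℝ} (hAB : A ≤ B)
    (h : ∀ x ∈ Ioo A B, f x = g x) :
    ∫ x in A..B, f x = ∫ x in A..B, g x := by
  apply intervalIntegral.integral_congr_ae
  have hsub : {x | ¬(x ∈ Set.uIoc A B → f x = g x)} ⊆ {A, B} := by
    intro x hx
    simp only [mem_setOf_eq, Classical.not_imp] at hx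
    obtain ⟨hx1, hx2⟩ := hx
    rw [uIoc_of_le hAB] at hx1
    rcases eq_or_lt_of_le hx1.2 with hB | hB
    · exact Or.inr hB
    · exact absurd (h x ⟨hx1.1, hB⟩) hx2
  have : MeasureTheory.volume ({A, B} : Set ℝ) = 0 :=
    (Set.toFinite _).measure_zero _
  exact MeasureTheory.ae_iff.2 (MeasureTheory.measure_mono_null hsub this)

end Stmt13Aux
namespace Stmt13Aux

/-- Generic cellwise integration over a partition `P 0 = 0 < P 1 < ... < P n = 1`. -/
lemma integral_cellwise {n : ℕ} {P : ℕ → ℝ} (hP0 : P 0 = 0) (hPn : P n = 1)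
    (hmono : ∀ m < n, P m < P (m + 1)) {f g : ℝ → ℝ} {K : ℕ → ℝ}
    (hfi : ∀ m < n, IntervalIntegrable f MeasureTheory.volume (P m) (P (m + 1)))
    (hcell : ∀ m < n, ∀ u ∈ Ioo (P m) (P (m + 1)),
      f u = K m * g ((u - P m) / (P (m + 1) - P m))) :
    ∫ u in (0:ℝ)..1, f u
      = ∑ m ∈ Finset.range n, K m * ((P (m + 1) - P m) * ∫ x in (0:ℝ)..1, g x) := by
  have hsplit := intervalIntegral.sum_integral_adjacent_intervals (a := P) (μ := MeasureTheory.volume) (n := n) hfi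
  rw [hP0, hPn] at hsplit
  rw [← hsplit]
  apply Finset.sum_congr rfl
  intro m hm
  rw [Finset.mem_range] at hm
  have hlt := hmono m hm
  have hne : P (m + 1) - P m ≠ 0 := sub_ne_zero.2 hlt.ne'
  have h1 : ∫ u in P m..P (m + 1), f u
      = ∫ u in P m..P (m + 1), K m * g ((u - P m) / (P (m + 1) - P m)) :=
    integral_congr_Ioo hlt.le (hcell m hm)
  rw [h1, intervalIntegral.integral_const_mul]
  congr 1
  have h2 : ∫ u in P m..P (m + 1), g ((u - P m) / (P (m + 1) - P m))
      = ∫ u in (0:ℝ)..(P (m + 1) - P m), g (u / (P (m + 1) - P m)) := by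
    have := intervalIntegral.integral_comp_sub_right
      (a := P m) (b := P (m + 1)) (fun x => g (x / (P (m + 1) - P m))) (P m)
    simpa using this
  rw [h2, intervalIntegral.integral_comp_div _ hne]
  rw [zero_div, div_self hne, smul_eq_mul]

end Stmt13Aux
namespace Stmt13Aux

section TM
variable {k ℓ : ℕ} {a : Fin k → Fin ℓ → ℝ}

lemma rowsum_nonneg (ha : IsTransfMatrix a) (i : Fin k) : 0 ≤ ∑ j, a i j :=
  Finset.sum_nonneg fun j _ => ha.1 i j

lemma pP_zero : pP a 0 = 0 := by simp [pP]

lemma pP_nonneg (ha : IsTransfMatrix a) (m : ℕ) : 0 ≤ pP a m :=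
  Finset.sum_nonneg fun i _ => by
    split
    · exact rowsum_nonneg ha i
    · exact le_refl 0

lemma pP_le_one (ha : IsTransfMatrix a) (m : ℕ) : pP a m ≤ 1 := by
  calc pP a m ≤ ∑ i, ∑ j, a i j := by
        apply Finset.sum_le_sum
        intro i _
        split
        · exact le_refl _
        · exact rowsum_nonneg ha i
    _ = 1 := ha.2.1

lemma pP_total (ha : IsTransfMatrix a) : pP a k = 1 := by
  unfold pP
  rw [← ha.2.1]
  apply Finset.sum_congr rfl
  intro i _
  rw [if_pos i.isLt]

lemma pP_succ (i : Fin k) : pP a ((i : ℕ) + 1) = pP a i + ∑ j, a i j := by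
  unfold pP
  have h : ∀ x : Fin k, (if (x : ℕ) < (i : ℕ) + 1 then ∑ j, a x j else 0)
      = (if (x : ℕ) < (i : ℕ) then ∑ j, a x j else 0) + (if x = i then ∑ j, a x j else 0) := by
    intro x
    rcases lt_trichotomy (x : ℕ) (i : ℕ) with h | h | h
    · rw [if_pos (Nat.lt_succ_of_lt h), if_pos h, if_neg (by intro he; rw [he] at h; exact lt_irrefl _ h), add_zero]
    · have hx : x = i := Fin.ext h
      rw [if_pos (by omega), if_neg (by omega), if_pos hx, zero_add]
    · rw [if_neg (by omega), if_neg (by omega), if_neg (by intro he; rw [he] at h; exact lt_irrefl _ h), add_zero]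
  rw [Finset.sum_congr rfl (fun x _ => h x), Finset.sum_add_distrib, Finset.sum_ite_eq' Finset.univ i]
  simp

lemma rowsum_pos (ha : IsTransfMatrix a) (i : Fin k) : 0 < ∑ j, a i j := by
  obtain ⟨j, hj⟩ := ha.2.2.2 i
  exact Finset.sum_pos' (fun j' _ => ha.1 i j') ⟨j, Finset.mem_univ j, (ha.1 i j).lt_of_ne (Ne.symm hj)⟩

lemma pP_lt_succ (ha : IsTransfMatrix a) (i : Fin k) : pP a i < pP a ((i : ℕ) + 1) := by
  rw [pP_succ]
  linarith [rowsum_pos ha i]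

lemma pP_mono (ha : IsTransfMatrix a) {m m' : ℕ} (h : m ≤ m') : pP a m ≤ pP a m' := by
  apply Finset.sum_le_sum
  intro i _
  split
  · rw [if_pos (by omega)]
  · split
    · exact rowsum_nonneg ha i
    · exact le_refl 0

/-- transpose matrix -/
lemma transpose_transf (ha : IsTransfMatrix a) : IsTransfMatrix (fun j i => a i j) := by
  refine ⟨fun j i => ha.1 i j, ?_, ha.2.2.2, ha.2.2.1⟩
  rw [Finset.sum_comm]
  exact ha.2.1

lemma qQ_eq_pP_transpose : qQ a = pP (fun j i => a i j) := rfl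

lemma Gdist_eq_Fdist_transpose : Gdist a = Fdist (fun j i => a i j) := rfl

lemma qQ_zero : qQ a 0 = 0 := pP_zero
lemma qQ_nonneg (ha : IsTransfMatrix a) (m : ℕ) : 0 ≤ qQ a m := pP_nonneg (transpose_transf ha) m
lemma qQ_le_one (ha : IsTransfMatrix a) (m : ℕ) : qQ a m ≤ 1 := pP_le_one (transpose_transf ha) m
lemma qQ_total (ha : IsTransfMatrix a) : qQ a ℓ = 1 := pP_total (transpose_transf ha)
lemma qQ_succ (j : Fin ℓ) : qQ a ((j : ℕ) + 1) = qQ a j + ∑ i, a i j := pP_succ j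
lemma qQ_lt_succ (ha : IsTransfMatrix a) (j : Fin ℓ) : qQ a j < qQ a ((j : ℕ) + 1) :=
  pP_lt_succ (transpose_transf ha) j
lemma qQ_mono (ha : IsTransfMatrix a) {m m' : ℕ} (h : m ≤ m') : qQ a m ≤ qQ a m' :=
  pP_mono (transpose_transf ha) h
lemma colsum_pos (ha : IsTransfMatrix a) (j : Fin ℓ) : 0 < ∑ i, a i j :=
  rowsum_pos (transpose_transf ha) j

/-! ### Fdist facts -/

lemma Fdist_mem (ha : IsTransfMatrix a) (i : Fin k) (u : ℝ) : Fdist a i u ∈ Icc (0:ℝ) 1 := by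
  unfold Fdist
  split
  · have hΔ : 0 < pP a ((i:ℕ)+1) - pP a i := sub_pos.2 (pP_lt_succ ha i)
    constructor
    · apply le_min zero_le_one
      apply div_nonneg (by linarith) hΔ.le
    · exact min_le_left _ _
  · exact ⟨le_refl 0, zero_le_one⟩

/-- On the open cell the value of `Fdist` is the affine ratio. -/
lemma Fdist_eq_ratio (ha : IsTransfMatrix a) (i : Fin k) {u : ℝ}
    (hu : u ∈ Ioo (pP a i) (pP a ((i:ℕ)+1))) :
    Fdist a i u = (u - pP a i) / (pP a ((i:ℕ)+1) - pP a i) := by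
  unfold Fdist
  rw [if_pos hu.1]
  have hΔ : 0 < pP a ((i:ℕ)+1) - pP a i := sub_pos.2 (pP_lt_succ ha i)
  apply min_eq_right
  rw [div_le_one hΔ]
  linarith [hu.2]

lemma Fdist_ratio_mem (ha : IsTransfMatrix a) (i : Fin k) {u : ℝ}
    (hu : u ∈ Ioo (pP a i) (pP a ((i:ℕ)+1))) :
    (u - pP a i) / (pP a ((i:ℕ)+1) - pP a i) ∈ Ioo (0:ℝ) 1 := by
  have hΔ : 0 < pP a ((i:ℕ)+1) - pP a i := sub_pos.2 (pP_lt_succ ha i)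
  constructor
  · apply div_pos (by linarith [hu.1]) hΔ
  · rw [div_lt_one hΔ]; linarith [hu.2]

lemma Fdist_eq_zero (ha : IsTransfMatrix a) (i : Fin k) {u : ℝ} (hu : u ≤ pP a i) :
    Fdist a i u = 0 := by
  unfold Fdist
  rw [if_neg (by linarith)]

lemma Fdist_eq_one (ha : IsTransfMatrix a) (i : Fin k) {u : ℝ} (hu : pP a ((i:ℕ)+1) ≤ u) :
    Fdist a i u = 1 := by
  unfold Fdist
  have hlt := pP_lt_succ ha i
  rw [if_pos (by linarith)]
  apply min_eq_left
  rw [le_div_iff₀ (by linarith), one_mul]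
  linarith

lemma Fdist_mono (ha : IsTransfMatrix a) (i : Fin k) : Monotone (Fdist a i) := by
  intro x y hxy
  have hΔ : 0 < pP a ((i:ℕ)+1) - pP a i := sub_pos.2 (pP_lt_succ ha i)
  unfold Fdist
  by_cases hx : pP a (i:ℕ) < x
  · rw [if_pos hx, if_pos (lt_of_lt_of_le hx hxy)]
    gcongr
  · rw [if_neg hx]
    by_cases hy : pP a (i:ℕ) < y
    · rw [if_pos hy]
      exact le_min zero_le_one (div_nonneg (by linarith) hΔ.le)
    · rw [if_neg hy]

lemma Fdist_zero' (ha : IsTransfMatrix a) (i : Fin k) : Fdist a i 0 = 0 :=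
  Fdist_eq_zero ha i (pP_nonneg ha i)

lemma Fdist_one' (ha : IsTransfMatrix a) (i : Fin k) : Fdist a i 1 = 1 :=
  Fdist_eq_one ha i (pP_le_one ha _)


lemma Gdist_mem (ha : IsTransfMatrix a) (j : Fin ℓ) (v : ℝ) : Gdist a j v ∈ Icc (0:ℝ) 1 :=
  Fdist_mem (transpose_transf ha) j v

lemma Gdist_eq_ratio (ha : IsTransfMatrix a) (j : Fin ℓ) {v : ℝ}
    (hv : v ∈ Ioo (qQ a j) (qQ a ((j:ℕ)+1))) :
    Gdist a j v = (v - qQ a j) / (qQ a ((j:ℕ)+1) - qQ a j) :=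
  Fdist_eq_ratio (transpose_transf ha) j hv

lemma Gdist_ratio_mem (ha : IsTransfMatrix a) (j : Fin ℓ) {v : ℝ}
    (hv : v ∈ Ioo (qQ a j) (qQ a ((j:ℕ)+1))) :
    (v - qQ a j) / (qQ a ((j:ℕ)+1) - qQ a j) ∈ Ioo (0:ℝ) 1 :=
  Fdist_ratio_mem (transpose_transf ha) j hv

lemma Gdist_eq_zero (ha : IsTransfMatrix a) (j : Fin ℓ) {v : ℝ} (hv : v ≤ qQ a j) :
    Gdist a j v = 0 := Fdist_eq_zero (transpose_transf ha) j hv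

lemma Gdist_eq_one (ha : IsTransfMatrix a) (j : Fin ℓ) {v : ℝ} (hv : qQ a ((j:ℕ)+1) ≤ v) :
    Gdist a j v = 1 := Fdist_eq_one (transpose_transf ha) j hv

lemma Gdist_mono (ha : IsTransfMatrix a) (j : Fin ℓ) : Monotone (Gdist a j) :=
  Fdist_mono (transpose_transf ha) j

lemma Gdist_zero' (ha : IsTransfMatrix a) (j : Fin ℓ) : Gdist a j 0 = 0 :=
  Fdist_zero' (transpose_transf ha) j

lemma Gdist_one' (ha : IsTransfMatrix a) (j : Fin ℓ) : Gdist a j 1 = 1 :=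
  Fdist_one' (transpose_transf ha) j

end TM
end Stmt13Aux
namespace Stmt13Aux

section Cop
variable {C D : ℝ → ℝ → ℝ}

lemma cop00 (hC : IsCopula C) : C 0 0 = 0 := hC.1 0 (by norm_num)
lemma cop01 (hC : IsCopula C) : C 0 1 = 0 := hC.2.1 1 (by norm_num)
lemma cop10 (hC : IsCopula C) : C 1 0 = 0 := hC.1 1 (by norm_num)

lemma cop_nonneg (hC : IsCopula C) {u v : ℝ} (hu : u ∈ Icc (0:ℝ) 1) (hv : v ∈ Icc (0:ℝ) 1) :
    0 ≤ C u v := by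
  have h := hC.2.2.2.2 0 u 0 v (by norm_num) hu (by norm_num) hv hu.1 hv.1
  have h1 := hC.1 u hu
  have h2 := hC.2.1 v hv
  have h3 := cop00 hC
  linarith

lemma cop_le_fst (hC : IsCopula C) {u v : ℝ} (hu : u ∈ Icc (0:ℝ) 1) (hv : v ∈ Icc (0:ℝ) 1) :
    C u v ≤ u := by
  have h := hC.2.2.2.2 0 u v 1 (by norm_num) hu hv (by norm_num) hu.1 hv.2
  have h1 := hC.2.2.1 u hu
  have h2 := hC.2.1 v hv
  have h3 := cop01 hC
  linarith

lemma cop_le_one (hC : IsCopula C) {u v : ℝ} (hu : u ∈ Icc (0:ℝ) 1) (hv : v ∈ Icc (0:ℝ) 1) :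
    C u v ≤ 1 := (cop_le_fst hC hu hv).trans hu.2

lemma cop_mono1 (hC : IsCopula C) {u₁ u₂ v : ℝ} (h1 : u₁ ∈ Icc (0:ℝ) 1) (h2 : u₂ ∈ Icc (0:ℝ) 1)
    (hv : v ∈ Icc (0:ℝ) 1) (h : u₁ ≤ u₂) : C u₁ v ≤ C u₂ v := by
  have hh := hC.2.2.2.2 u₁ u₂ 0 v h1 h2 (by norm_num) hv h hv.1
  have e1 := hC.1 u₁ h1
  have e2 := hC.1 u₂ h2
  linarith

lemma cop_lip1 (hC : IsCopula C) {u₁ u₂ v : ℝ} (h1 : u₁ ∈ Icc (0:ℝ) 1) (h2 : u₂ ∈ Icc (0:ℝ) 1)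
    (hv : v ∈ Icc (0:ℝ) 1) (h : u₁ ≤ u₂) : C u₂ v - C u₁ v ≤ u₂ - u₁ := by
  have hh := hC.2.2.2.2 u₁ u₂ v 1 h1 h2 hv (by norm_num) h hv.2
  have e1 := hC.2.2.1 u₁ h1
  have e2 := hC.2.2.1 u₂ h2
  linarith

lemma cop_abs_lip1 (hC : IsCopula C) {x y v : ℝ} (hx : x ∈ Icc (0:ℝ) 1) (hy : y ∈ Icc (0:ℝ) 1)
    (hv : v ∈ Icc (0:ℝ) 1) : |C x v - C y v| ≤ |x - y| := by
  rcases le_total x y with h | h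
  · rw [abs_sub_comm, abs_sub_comm x y]
    rw [abs_of_nonneg (by linarith [cop_mono1 hC hx hy hv h]), abs_of_nonneg (by linarith)]
    exact cop_lip1 hC hx hy hv h
  · rw [abs_of_nonneg (by linarith [cop_mono1 hC hy hx hv h]), abs_of_nonneg (by linarith)]
    exact cop_lip1 hC hy hx hv h

lemma cop_mono2 (hC : IsCopula C) {u v₁ v₂ : ℝ} (hu : u ∈ Icc (0:ℝ) 1) (h1 : v₁ ∈ Icc (0:ℝ) 1)
    (h2 : v₂ ∈ Icc (0:ℝ) 1) (h : v₁ ≤ v₂) : C u v₁ ≤ C u v₂ := by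
  have hh := hC.2.2.2.2 0 u v₁ v₂ (by norm_num) hu h1 h2 hu.1 h
  have e1 := hC.2.1 v₁ h1
  have e2 := hC.2.1 v₂ h2
  linarith

lemma cop_lip2 (hC : IsCopula C) {u v₁ v₂ : ℝ} (hu : u ∈ Icc (0:ℝ) 1) (h1 : v₁ ∈ Icc (0:ℝ) 1)
    (h2 : v₂ ∈ Icc (0:ℝ) 1) (h : v₁ ≤ v₂) : C u v₂ - C u v₁ ≤ v₂ - v₁ := by
  have hh := hC.2.2.2.2 u 1 v₁ v₂ hu (by norm_num) h1 h2 hu.2 h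
  have e1 := hC.2.2.2.1 v₁ h1
  have e2 := hC.2.2.2.1 v₂ h2
  linarith

lemma cop_abs_lip2 (hC : IsCopula C) {u x y : ℝ} (hu : u ∈ Icc (0:ℝ) 1) (hx : x ∈ Icc (0:ℝ) 1)
    (hy : y ∈ Icc (0:ℝ) 1) : |C u x - C u y| ≤ |x - y| := by
  rcases le_total x y with h | h
  · rw [abs_sub_comm, abs_sub_comm x y]
    rw [abs_of_nonneg (by linarith [cop_mono2 hC hu hx hy h]), abs_of_nonneg (by linarith)]
    exact cop_lip2 hC hu hx hy h
  · rw [abs_of_nonneg (by linarith [cop_mono2 hC hu hy hx h]), abs_of_nonneg (by linarith)]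
    exact cop_lip2 hC hu hy hx h

/-- difference of copulas vanishes on the boundary of the square -/
lemma csub_bdry (hC : IsCopula C) (hD : IsCopula D) {x y : ℝ}
    (hx : x ∈ Icc (0:ℝ) 1) (hy : y ∈ Icc (0:ℝ) 1)
    (h : x = 0 ∨ x = 1 ∨ y = 0 ∨ y = 1) : C x y - D x y = 0 := by
  rcases h with h | h | h | h <;> subst h
  · rw [hC.2.1 y hy, hD.2.1 y hy, sub_zero]
  · rw [hC.2.2.2.1 y hy, hD.2.2.2.1 y hy, sub_self]
  · rw [hC.1 x hx, hD.1 x hx, sub_zero]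
  · rw [hC.2.2.1 x hx, hD.2.2.1 x hx, sub_self]

lemma csub_abs_le_one (hC : IsCopula C) (hD : IsCopula D) {x y : ℝ}
    (hx : x ∈ Icc (0:ℝ) 1) (hy : y ∈ Icc (0:ℝ) 1) : |C x y - D x y| ≤ 1 := by
  rw [abs_sub_le_iff]
  constructor
  · linarith [cop_le_one hC hx hy, cop_nonneg hD hx hy]
  · linarith [cop_le_one hD hx hy, cop_nonneg hC hx hy]

end Cop
end Stmt13Aux
namespace Stmt13Aux

section Patch
variable {k ℓ : ℕ} {a : Fin k → Fin ℓ → ℝ}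

lemma telescope_F (ha : IsTransfMatrix a) {u : ℝ} (hu : u ∈ Icc (0:ℝ) 1) :
    ∑ i : Fin k, (∑ j, a i j) * Fdist a i u = u := by
  have key : ∀ i : Fin k, (∑ j, a i j) * Fdist a i u
      = min u (pP a ((i:ℕ)+1)) - min u (pP a (i:ℕ)) := by
    intro i
    have hΔ : 0 < pP a ((i:ℕ)+1) - pP a i := sub_pos.2 (pP_lt_succ ha i)
    have hrow : ∑ j, a i j = pP a ((i:ℕ)+1) - pP a i := by rw [pP_succ]; ring
    by_cases h1 : u ≤ pP a (i:ℕ)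
    · rw [Fdist_eq_zero ha i h1, mul_zero, min_eq_left h1,
        min_eq_left (h1.trans (pP_lt_succ ha i).le), sub_self]
    · push_neg at h1
      by_cases h2 : pP a ((i:ℕ)+1) ≤ u
      · rw [Fdist_eq_one ha i h2, mul_one, min_eq_right h2, min_eq_right (by linarith), hrow]
      · push_neg at h2
        rw [Fdist_eq_ratio ha i ⟨h1, h2⟩, hrow, min_eq_left h2.le, min_eq_right h1.le]
        field_simp
  rw [Finset.sum_congr rfl fun i _ => key i]
  have := Finset.sum_range_sub (fun m => min u (pP a m)) k
  rw [Fin.sum_univ_eq_sum_range (fun m => min u (pP a (m+1)) - min u (pP a m)) k, this,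
    pP_zero, pP_total ha, min_eq_left hu.2, min_eq_right hu.1, sub_zero]

lemma telescope_G (ha : IsTransfMatrix a) {v : ℝ} (hv : v ∈ Icc (0:ℝ) 1) :
    ∑ j : Fin ℓ, (∑ i, a i j) * Gdist a j v = v := by
  rw [Gdist_eq_Fdist_transpose]
  exact telescope_F (transpose_transf ha) hv

lemma patch_isCopula (ha : IsTransfMatrix a) {C : ℝ → ℝ → ℝ} (hC : IsCopula C) :
    IsCopula (patch a C) := by
  have haT := transpose_transf ha
  refine ⟨?_, ?_, ?_, ?_, ?_⟩
  · intro u _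
    unfold patch
    have : ∀ i : Fin k, ∑ j, a i j * C (Fdist a i u) (Gdist a j 0) = 0 := by
      intro i
      apply Finset.sum_eq_zero
      intro j _
      rw [Gdist_zero' ha j,
        hC.1 _ (Fdist_mem ha i u), mul_zero]
    rw [Finset.sum_congr rfl fun i _ => this i, Finset.sum_const_zero]
  · intro v _
    unfold patch
    apply Finset.sum_eq_zero
    intro i _
    apply Finset.sum_eq_zero
    intro j _
    rw [show Fdist a i 0 = 0 from Fdist_zero' ha i, hC.2.1 _ (Gdist_mem ha j v), mul_zero]
  · intro u hu
    unfold patch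
    have : ∀ i : Fin k, ∑ j, a i j * C (Fdist a i u) (Gdist a j 1)
        = (∑ j, a i j) * Fdist a i u := by
      intro i
      rw [Finset.sum_mul]
      apply Finset.sum_congr rfl
      intro j _
      rw [Gdist_one' ha j, hC.2.2.1 _ (Fdist_mem ha i u)]
    rw [Finset.sum_congr rfl fun i _ => this i]
    exact telescope_F ha hu
  · intro v hv
    unfold patch
    have : ∀ i : Fin k, ∑ j, a i j * C (Fdist a i 1) (Gdist a j v)
        = ∑ j, a i j * Gdist a j v := by
      intro i
      apply Finset.sum_congr rfl
      intro j _
      rw [show Fdist a i 1 = 1 from Fdist_one' ha i, hC.2.2.2.1 _ (Gdist_mem ha j v)]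
    rw [Finset.sum_congr rfl fun i _ => this i, Finset.sum_comm]
    have : ∀ j : Fin ℓ, ∑ i, a i j * Gdist a j v = (∑ i, a i j) * Gdist a j v := by
      intro j; rw [Finset.sum_mul]
    rw [Finset.sum_congr rfl fun j _ => this j]
    exact telescope_G ha hv
  · intro u₁ u₂ v₁ v₂ hu₁ hu₂ hv₁ hv₂ hu hv
    unfold patch
    rw [← Finset.sum_sub_distrib, ← Finset.sum_sub_distrib, ← Finset.sum_add_distrib]
    apply Finset.sum_nonneg
    intro i _
    rw [← Finset.sum_sub_distrib, ← Finset.sum_sub_distrib, ← Finset.sum_add_distrib]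
    apply Finset.sum_nonneg
    intro j _
    have h2inc := hC.2.2.2.2 (Fdist a i u₁) (Fdist a i u₂) (Gdist a j v₁) (Gdist a j v₂)
      (Fdist_mem ha i u₁) (Fdist_mem ha i u₂) (Gdist_mem ha j v₁) (Gdist_mem ha j v₂)
      (Fdist_mono ha i hu) (Gdist_mono ha j hv)
    nlinarith [ha.1 i j]

lemma iter_isCopula (ha : IsTransfMatrix a) {C : ℝ → ℝ → ℝ} (hC : IsCopula C) (r : ℕ) :
    IsCopula ((patch a)^[r] C) := by
  induction r with
  | zero => exact hC
  | succ r ih => rw [Function.iterate_succ_apply']; exact patch_isCopula ha ih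

end Patch
end Stmt13Aux
namespace Stmt13Aux

section Sup
variable {k ℓ : ℕ} {a : Fin k → Fin ℓ → ℝ}

lemma Fdist_bdry_of_ne (ha : IsTransfMatrix a) {i i' : Fin k} (hne : i' ≠ i) {u : ℝ}
    (hu : u ∈ Ioo (pP a i) (pP a ((i:ℕ)+1))) :
    Fdist a i' u = 0 ∨ Fdist a i' u = 1 := by
  rcases lt_or_gt_of_ne (fun h => hne (Fin.ext h) : (i':ℕ) ≠ (i:ℕ)) with h | h
  · right
    exact Fdist_eq_one ha i' (le_trans (pP_mono ha h) hu.1.le)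
  · left
    exact Fdist_eq_zero ha i' (le_trans hu.2.le (pP_mono ha h))

lemma Gdist_bdry_of_ne (ha : IsTransfMatrix a) {j j' : Fin ℓ} (hne : j' ≠ j) {v : ℝ}
    (hv : v ∈ Ioo (qQ a j) (qQ a ((j:ℕ)+1))) :
    Gdist a j' v = 0 ∨ Gdist a j' v = 1 :=
  Fdist_bdry_of_ne (transpose_transf ha) hne hv

lemma Fdist_bdry_of_notmem (ha : IsTransfMatrix a) {u : ℝ}
    (h : ∀ i : Fin k, u ∉ Ioo (pP a i) (pP a ((i:ℕ)+1))) (i : Fin k) :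
    Fdist a i u = 0 ∨ Fdist a i u = 1 := by
  have hd : u ≤ pP a i ∨ pP a ((i:ℕ)+1) ≤ u := by
    by_contra hcon
    push_neg at hcon
    exact h i ⟨hcon.1, hcon.2⟩
  rcases hd with h1 | h2
  · exact Or.inl (Fdist_eq_zero ha i h1)
  · exact Or.inr (Fdist_eq_one ha i h2)

/-- The core sup-norm contraction estimate. -/
lemma patch_contract (ha : IsTransfMatrix a) {C D : ℝ → ℝ → ℝ}
    (hC : IsCopula C) (hD : IsCopula D) {B lam : ℝ} (hB : 0 ≤ B) (hlam0 : 0 ≤ lam)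
    (hlam : ∀ i j, a i j ≤ lam)
    (hbd : ∀ x ∈ Icc (0:ℝ) 1, ∀ y ∈ Icc (0:ℝ) 1, |C x y - D x y| ≤ B)
    {u v : ℝ} (hu : u ∈ Icc (0:ℝ) 1) (hv : v ∈ Icc (0:ℝ) 1) :
    |patch a C u v - patch a D u v| ≤ lam * B := by
  have haT := transpose_transf ha
  have hdiff : patch a C u v - patch a D u v
      = ∑ i, ∑ j, a i j * (C (Fdist a i u) (Gdist a j v) - D (Fdist a i u) (Gdist a j v)) := by
    unfold patch
    rw [← Finset.sum_sub_distrib]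
    apply Finset.sum_congr rfl
    intro i _
    rw [← Finset.sum_sub_distrib]
    apply Finset.sum_congr rfl
    intro j _
    ring
  rw [hdiff]
  -- terms with a boundary coordinate vanish
  have hvanF : ∀ i j, (Fdist a i u = 0 ∨ Fdist a i u = 1) →
      a i j * (C (Fdist a i u) (Gdist a j v) - D (Fdist a i u) (Gdist a j v)) = 0 := by
    intro i j h
    rw [csub_bdry hC hD (Fdist_mem ha i u) (Gdist_mem ha j v) (by tauto), mul_zero]
  have hvanG : ∀ i j, (Gdist a j v = 0 ∨ Gdist a j v = 1) →
      a i j * (C (Fdist a i u) (Gdist a j v) - D (Fdist a i u) (Gdist a j v)) = 0 := by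
    intro i j h
    rw [csub_bdry hC hD (Fdist_mem ha i u) (Gdist_mem ha j v) (by tauto), mul_zero]
  by_cases hex : (∃ i : Fin k, u ∈ Ioo (pP a i) (pP a ((i:ℕ)+1)))
      ∧ (∃ j : Fin ℓ, v ∈ Ioo (qQ a j) (qQ a ((j:ℕ)+1)))
  · obtain ⟨⟨i0, hi0⟩, ⟨j0, hj0⟩⟩ := hex
    have hsum : ∑ i, ∑ j, a i j * (C (Fdist a i u) (Gdist a j v) - D (Fdist a i u) (Gdist a j v))
        = a i0 j0 * (C (Fdist a i0 u) (Gdist a j0 v) - D (Fdist a i0 u) (Gdist a j0 v)) := by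
      rw [Finset.sum_eq_single i0]
      · rw [Finset.sum_eq_single j0]
        · intro j _ hj
          exact hvanG i0 j (Gdist_bdry_of_ne ha hj hj0)
        · intro h; exact absurd (Finset.mem_univ j0) h
      · intro i _ hi
        apply Finset.sum_eq_zero
        intro j _
        exact hvanF i j (Fdist_bdry_of_ne ha hi hi0)
      · intro h; exact absurd (Finset.mem_univ i0) h
    rw [hsum, abs_mul, abs_of_nonneg (ha.1 i0 j0)]
    exact mul_le_mul (hlam i0 j0) (hbd _ (Fdist_mem ha i0 u) _ (Gdist_mem ha j0 v))
      (abs_nonneg _) hlam0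
  · have hzero : ∑ i, ∑ j, a i j * (C (Fdist a i u) (Gdist a j v) - D (Fdist a i u) (Gdist a j v)) = 0 := by
      rcases not_and_or.1 hex with h | h
      · push_neg at h
        apply Finset.sum_eq_zero
        intro i _
        apply Finset.sum_eq_zero
        intro j _
        exact hvanF i j (Fdist_bdry_of_notmem ha h i)
      · push_neg at h
        apply Finset.sum_eq_zero
        intro i _
        apply Finset.sum_eq_zero
        intro j _
        exact hvanG i j (Fdist_bdry_of_notmem haT h j)
    rw [hzero, abs_zero]
    positivity

lemma exists_lambda (hk : 2 ≤ k) (ha : IsTransfMatrix a) :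
    ∃ lam : ℝ, 0 ≤ lam ∧ lam < 1 ∧ ∀ i j, a i j ≤ lam := by
  have hk0 : 0 < k := by omega
  have hl0 : 0 < ℓ := by
    by_contra h
    push_neg at h
    interval_cases ℓ
    · obtain ⟨j, _⟩ := ha.2.2.2 ⟨0, hk0⟩
      exact j.elim0
  have hne : (Finset.univ : Finset (Fin k × Fin ℓ)).Nonempty := by
    exact ⟨(⟨0, hk0⟩, ⟨0, hl0⟩), Finset.mem_univ _⟩
  set lam := Finset.univ.sup' hne (fun p : Fin k × Fin ℓ => a p.1 p.2) with hlamdef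
  refine ⟨lam, ?_, ?_, ?_⟩
  · exact le_trans (ha.1 ⟨0, hk0⟩ ⟨0, hl0⟩) (Finset.le_sup' (fun p : Fin k × Fin ℓ => a p.1 p.2) (Finset.mem_univ (⟨0, hk0⟩, ⟨0, hl0⟩)))
  · obtain ⟨⟨i1, j1⟩, _, hmax⟩ := Finset.exists_mem_eq_sup' hne (fun p : Fin k × Fin ℓ => a p.1 p.2)
    rw [hlamdef, hmax]
    -- pick another column
    have : ∃ i2 : Fin k, i2 ≠ i1 := by
      by_cases h0 : (i1 : ℕ) = 0
      · exact ⟨⟨1, by omega⟩, fun h => by simp [Fin.ext_iff, h0] at h⟩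
      · exact ⟨⟨0, by omega⟩, fun h => h0 (by simpa [Fin.ext_iff] using h.symm)⟩
    obtain ⟨i2, hi2⟩ := this
    obtain ⟨j2, hj2⟩ := ha.2.2.2 i2
    have hpos : 0 < a i2 j2 := (ha.1 i2 j2).lt_of_ne (Ne.symm hj2)
    have hsum : a i1 j1 + a i2 j2 ≤ ∑ i, ∑ j, a i j := by
      rw [← Finset.sum_product' Finset.univ Finset.univ (fun i j => a i j)]
      exact Finset.add_le_sum (fun p _ => ha.1 p.1 p.2) (Finset.mem_univ (i1, j1))
        (Finset.mem_univ (i2, j2)) (fun hpair => hi2 (congrArg Prod.fst hpair).symm)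
    rw [ha.2.1] at hsum
    linarith
  · intro i j
    exact Finset.le_sup' (fun p : Fin k × Fin ℓ => a p.1 p.2) (Finset.mem_univ (i, j))

lemma iter_dist (ha : IsTransfMatrix a) {lam : ℝ} (hlam0 : 0 ≤ lam)
    (hlam : ∀ i j, a i j ≤ lam) {C D : ℝ → ℝ → ℝ} (hC : IsCopula C) (hD : IsCopula D) :
    ∀ r : ℕ, ∀ u ∈ Icc (0:ℝ) 1, ∀ v ∈ Icc (0:ℝ) 1,
      |(patch a)^[r] C u v - (patch a)^[r] D u v| ≤ lam ^ r := by
  intro r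
  induction r with
  | zero => intro u hu v hv; simpa using csub_abs_le_one hC hD hu hv
  | succ r ih =>
    intro u hu v hv
    rw [Function.iterate_succ_apply', Function.iterate_succ_apply']
    calc |patch a ((patch a)^[r] C) u v - patch a ((patch a)^[r] D) u v| ≤ lam * lam ^ r :=
          patch_contract ha (iter_isCopula ha hC r) (iter_isCopula ha hD r)
            (pow_nonneg hlam0 r) hlam0 hlam (fun x hx y hy => ih x hx y hy) hu hv
      _ = lam ^ (r + 1) := by ring

end Sup
end Stmt13Aux
namespace Stmt13Aux
open Filter

/-- the independence copula -/
def PiC : ℝ → ℝ → ℝ := fun u v => u * v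

lemma PiC_isCopula : IsCopula PiC := by
  refine ⟨fun u _ => mul_zero u, fun v _ => zero_mul v, fun u _ => mul_one u,
    fun v _ => one_mul v, ?_⟩
  intro u₁ u₂ v₁ v₂ _ _ _ _ hu hv
  unfold PiC
  nlinarith

section CA
variable {k ℓ : ℕ} (a : Fin k → Fin ℓ → ℝ)

/-- the invariant copula, as pointwise limit of the iterates applied to `PiC` -/
def CAfun : ℝ → ℝ → ℝ := fun u v => limUnder Filter.atTop (fun r => (patch a)^[r] PiC u v)

variable {a}

lemma CA_tendsto (hk : 2 ≤ k) (ha : IsTransfMatrix a) {u v : ℝ}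
    (hu : u ∈ Icc (0:ℝ) 1) (hv : v ∈ Icc (0:ℝ) 1) :
    Tendsto (fun r => (patch a)^[r] PiC u v) atTop (nhds (CAfun a u v)) := by
  obtain ⟨lam, hlam0, hlam1, hlam⟩ := exists_lambda hk ha
  have hcs : CauchySeq (fun r => (patch a)^[r] PiC u v) := by
    apply cauchySeq_of_le_geometric lam 1 hlam1
    intro r
    rw [Real.dist_eq]
    have := iter_dist ha hlam0 hlam PiC_isCopula (patch_isCopula ha PiC_isCopula) r u hu v hv
    rw [Function.iterate_succ_apply]
    calc |(patch a)^[r] PiC u v - (patch a)^[r] (patch a PiC) u v| ≤ lam ^ r := this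
      _ = 1 * lam ^ r := (one_mul _).symm
  exact hcs.tendsto_limUnder

lemma CA_isCopula (hk : 2 ≤ k) (ha : IsTransfMatrix a) : IsCopula (CAfun a) := by
  have hiter : ∀ r, IsCopula ((patch a)^[r] PiC) := iter_isCopula ha PiC_isCopula
  refine ⟨?_, ?_, ?_, ?_, ?_⟩
  · intro u hu
    have h1 := CA_tendsto hk ha hu (show (0:ℝ) ∈ Icc (0:ℝ) 1 by norm_num)
    have h2 : Tendsto (fun r => (patch a)^[r] PiC u 0) atTop (nhds 0) := by
      simpa [fun r => (hiter r).1 u hu] using tendsto_const_nhds (x := (0:ℝ)) (f := atTop)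
    exact tendsto_nhds_unique h1 h2
  · intro v hv
    have h1 := CA_tendsto hk ha (show (0:ℝ) ∈ Icc (0:ℝ) 1 by norm_num) hv
    have h2 : Tendsto (fun r => (patch a)^[r] PiC 0 v) atTop (nhds 0) := by
      simpa [fun r => (hiter r).2.1 v hv] using tendsto_const_nhds (x := (0:ℝ)) (f := atTop)
    exact tendsto_nhds_unique h1 h2
  · intro u hu
    have h1 := CA_tendsto hk ha hu (show (1:ℝ) ∈ Icc (0:ℝ) 1 by norm_num)
    have h2 : Tendsto (fun r => (patch a)^[r] PiC u 1) atTop (nhds u) := by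
      simpa [fun r => (hiter r).2.2.1 u hu] using tendsto_const_nhds (x := u) (f := atTop)
    exact tendsto_nhds_unique h1 h2
  · intro v hv
    have h1 := CA_tendsto hk ha (show (1:ℝ) ∈ Icc (0:ℝ) 1 by norm_num) hv
    have h2 : Tendsto (fun r => (patch a)^[r] PiC 1 v) atTop (nhds v) := by
      simpa [fun r => (hiter r).2.2.2.1 v hv] using tendsto_const_nhds (x := v) (f := atTop)
    exact tendsto_nhds_unique h1 h2
  · intro u₁ u₂ v₁ v₂ hu₁ hu₂ hv₁ hv₂ hu hv
    have hten : Tendsto (fun r => (patch a)^[r] PiC u₂ v₂ - (patch a)^[r] PiC u₂ v₁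
        - (patch a)^[r] PiC u₁ v₂ + (patch a)^[r] PiC u₁ v₁) atTop
        (nhds (CAfun a u₂ v₂ - CAfun a u₂ v₁ - CAfun a u₁ v₂ + CAfun a u₁ v₁)) := by
      exact (((CA_tendsto hk ha hu₂ hv₂).sub (CA_tendsto hk ha hu₂ hv₁)).sub
        (CA_tendsto hk ha hu₁ hv₂)).add (CA_tendsto hk ha hu₁ hv₁)
    apply ge_of_tendsto hten
    filter_upwards with r
    exact (hiter r).2.2.2.2 u₁ u₂ v₁ v₂ hu₁ hu₂ hv₁ hv₂ hu hv

lemma CA_fixed (hk : 2 ≤ k) (ha : IsTransfMatrix a) {u v : ℝ}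
    (hu : u ∈ Icc (0:ℝ) 1) (hv : v ∈ Icc (0:ℝ) 1) :
    patch a (CAfun a) u v = CAfun a u v := by
  show (∑ i, ∑ j, a i j * CAfun a (Fdist a i u) (Gdist a j v)) = CAfun a u v
  have h1 : Tendsto (fun r => ∑ i, ∑ j, a i j * (patch a)^[r] PiC (Fdist a i u) (Gdist a j v))
      atTop (nhds (∑ i, ∑ j, a i j * CAfun a (Fdist a i u) (Gdist a j v))) := by
    apply tendsto_finset_sum
    intro i _
    apply tendsto_finset_sum
    intro j _
    exact (CA_tendsto hk ha (Fdist_mem ha i u) (Gdist_mem ha j v)).const_mul (a i j)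
  have h2 : (fun r => ∑ i, ∑ j, a i j * (patch a)^[r] PiC (Fdist a i u) (Gdist a j v))
      = fun r => (patch a)^[r + 1] PiC u v := by
    funext r
    rw [Function.iterate_succ_apply']
    rfl
  rw [h2] at h1
  have h3 : Tendsto (fun r => (patch a)^[r + 1] PiC u v) atTop (nhds (CAfun a u v)) :=
    (Filter.tendsto_add_atTop_iff_nat 1).2 (CA_tendsto hk ha hu hv)
  exact tendsto_nhds_unique h1 h3
lemma iter_CA_eq (hk : 2 ≤ k) (ha : IsTransfMatrix a) (r : ℕ) {u v : ℝ}
    (hu : u ∈ Icc (0:ℝ) 1) (hv : v ∈ Icc (0:ℝ) 1) :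
    (patch a)^[r] (CAfun a) u v = CAfun a u v := by
  induction r generalizing u v with
  | zero => rfl
  | succ r ih =>
    rw [Function.iterate_succ_apply']
    have : patch a ((patch a)^[r] (CAfun a)) u v = patch a (CAfun a) u v := by
      show (∑ i, ∑ j, a i j * (patch a)^[r] (CAfun a) (Fdist a i u) (Gdist a j v))
          = ∑ i, ∑ j, a i j * CAfun a (Fdist a i u) (Gdist a j v)
      apply Finset.sum_congr rfl
      intro i _
      apply Finset.sum_congr rfl
      intro j _
      rw [ih (Fdist_mem ha i u) (Gdist_mem ha j v)]
    rw [this, CA_fixed hk ha hu hv]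

lemma CA_unique (hk : 2 ≤ k) (ha : IsTransfMatrix a) {C' : ℝ → ℝ → ℝ} (hC' : IsCopula C')
    (hfix : ∀ u ∈ Icc (0:ℝ) 1, ∀ v ∈ Icc (0:ℝ) 1, patch a C' u v = C' u v)
    {u v : ℝ} (hu : u ∈ Icc (0:ℝ) 1) (hv : v ∈ Icc (0:ℝ) 1) : C' u v = CAfun a u v := by
  obtain ⟨lam, hlam0, hlam1, hlam⟩ := exists_lambda hk ha
  have hCA := CA_isCopula hk ha
  have key : ∀ r : ℕ, ∀ u ∈ Icc (0:ℝ) 1, ∀ v ∈ Icc (0:ℝ) 1,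
      |C' u v - CAfun a u v| ≤ lam ^ r := by
    intro r
    induction r with
    | zero => intro u hu v hv; simpa using csub_abs_le_one hC' hCA hu hv
    | succ r ih =>
      intro u hu v hv
      rw [← hfix u hu v hv, ← CA_fixed hk ha hu hv]
      calc |patch a C' u v - patch a (CAfun a) u v| ≤ lam * lam ^ r :=
            patch_contract ha hC' hCA (pow_nonneg hlam0 r) hlam0 hlam ih hu hv
        _ = lam ^ (r + 1) := by ring
  have habs : |C' u v - CAfun a u v| ≤ 0 := by
    apply ge_of_tendsto (tendsto_pow_atTop_nhds_zero_of_lt_one hlam0 hlam1)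
    filter_upwards with r
    exact key r u hu v hv
  have := abs_nonneg (C' u v - CAfun a u v)
  have : |C' u v - CAfun a u v| = 0 := le_antisymm habs this
  linarith [abs_eq_zero.1 this, sub_eq_zero.1 (abs_eq_zero.1 this)]

end CA
end Stmt13Aux
namespace Stmt13Aux
open Filter

section Deriv
variable {k ℓ : ℕ} {a : Fin k → Fin ℓ → ℝ} {C D : ℝ → ℝ → ℝ}

lemma abs_d1_le (hC : IsCopula C) (hD : IsCopula D) {u v : ℝ}
    (hu : u ∈ Ioo (0:ℝ) 1) (hv : v ∈ Icc (0:ℝ) 1) : |d1 (csub C D) u v| ≤ 2 := by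
  apply abs_deriv_le (by norm_num) (isOpen_Ioo.mem_nhds hu)
  intro x hx y hy
  have h1 := cop_abs_lip1 hC (Ioo_subset_Icc_self hx) (Ioo_subset_Icc_self hy) hv
  have h2 := cop_abs_lip1 hD (Ioo_subset_Icc_self hx) (Ioo_subset_Icc_self hy) hv
  calc |csub C D x v - csub C D y v| = |(C x v - C y v) - (D x v - D y v)| := by
        unfold csub; ring_nf
    _ ≤ |C x v - C y v| + |D x v - D y v| := abs_sub _ _
    _ ≤ |x - y| + |x - y| := add_le_add h1 h2
    _ = 2 * |x - y| := by ring

lemma abs_d2_le (hC : IsCopula C) (hD : IsCopula D) {u v : ℝ}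
    (hu : u ∈ Icc (0:ℝ) 1) (hv : v ∈ Ioo (0:ℝ) 1) : |d2 (csub C D) u v| ≤ 2 := by
  apply abs_deriv_le (by norm_num) (isOpen_Ioo.mem_nhds hv)
  intro x hx y hy
  have h1 := cop_abs_lip2 hC hu (Ioo_subset_Icc_self hx) (Ioo_subset_Icc_self hy)
  have h2 := cop_abs_lip2 hD hu (Ioo_subset_Icc_self hx) (Ioo_subset_Icc_self hy)
  calc |csub C D u x - csub C D u y| = |(C u x - C u y) - (D u x - D u y)| := by
        unfold csub; ring_nf
    _ ≤ |C u x - C u y| + |D u x - D u y| := abs_sub _ _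
    _ ≤ |x - y| + |x - y| := add_le_add h1 h2
    _ = 2 * |x - y| := by ring

/-- On an open cell, the patched difference is a single rescaled term. -/
lemma patch_csub_cell (ha : IsTransfMatrix a) (hC : IsCopula C) (hD : IsCopula D)
    {i : Fin k} {j : Fin ℓ} {x v : ℝ} (hx : x ∈ Ioo (pP a i) (pP a ((i:ℕ)+1)))
    (hv : v ∈ Ioo (qQ a j) (qQ a ((j:ℕ)+1))) :
    patch a C x v - patch a D x v
      = a i j * (C (Fdist a i x) (Gdist a j v) - D (Fdist a i x) (Gdist a j v)) := by
  have hdiff : patch a C x v - patch a D x v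
      = ∑ i', ∑ j', a i' j' * (C (Fdist a i' x) (Gdist a j' v) - D (Fdist a i' x) (Gdist a j' v)) := by
    unfold patch
    rw [← Finset.sum_sub_distrib]
    apply Finset.sum_congr rfl
    intro i' _
    rw [← Finset.sum_sub_distrib]
    apply Finset.sum_congr rfl
    intro j' _
    ring
  rw [hdiff, Finset.sum_eq_single i]
  · rw [Finset.sum_eq_single j]
    · intro j' _ hj'
      rw [csub_bdry hC hD (Fdist_mem ha i x) (Gdist_mem ha j' v)
        (by rcases Gdist_bdry_of_ne ha hj' hv with h | h <;> tauto), mul_zero]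
    · intro h; exact absurd (Finset.mem_univ j) h
  · intro i' _ hi'
    apply Finset.sum_eq_zero
    intro j' _
    rw [csub_bdry hC hD (Fdist_mem ha i' x) (Gdist_mem ha j' v)
      (by rcases Fdist_bdry_of_ne ha hi' hx with h | h <;> tauto), mul_zero]
  · intro h; exact absurd (Finset.mem_univ i) h

/-- derivative formula in the first variable, on open cells -/
lemma d1_patch (ha : IsTransfMatrix a) (hC : IsCopula C) (hD : IsCopula D)
    {i : Fin k} {j : Fin ℓ} {u v : ℝ} (hu : u ∈ Ioo (pP a i) (pP a ((i:ℕ)+1)))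
    (hv : v ∈ Ioo (qQ a j) (qQ a ((j:ℕ)+1))) :
    d1 (csub (patch a C) (patch a D)) u v
      = (a i j / (pP a ((i:ℕ)+1) - pP a i))
        * d1 (csub C D) ((u - pP a (i:ℕ)) / (pP a ((i:ℕ)+1) - pP a i))
            ((v - qQ a j) / (qQ a ((j:ℕ)+1) - qQ a j)) := by
  have hΔ : (0:ℝ) < pP a ((i:ℕ)+1) - pP a i := sub_pos.2 (pP_lt_succ ha i)
  set w := (v - qQ a j) / (qQ a ((j:ℕ)+1) - qQ a j) with hw
  have hGv : Gdist a j v = w := Gdist_eq_ratio ha j hv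
  have hev : (fun x => csub (patch a C) (patch a D) x v)
      =ᶠ[nhds u] (fun x => a i j * csub C D ((x - pP a (i:ℕ)) / (pP a ((i:ℕ)+1) - pP a i)) w) := by
    filter_upwards [isOpen_Ioo.mem_nhds hu] with x hx
    have h1 := patch_csub_cell ha hC hD hx hv
    have h2 := Fdist_eq_ratio ha i hx
    unfold csub
    rw [h1, h2, hGv]
  unfold d1
  rw [hev.deriv_eq]
  have : deriv (fun x => a i j * csub C D ((x - pP a (i:ℕ)) / (pP a ((i:ℕ)+1) - pP a i)) w) u
      = a i j * deriv (fun x => (fun y => csub C D y w) ((x - pP a (i:ℕ)) / (pP a ((i:ℕ)+1) - pP a i))) u :=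
    deriv_const_mul_field (a i j)
  rw [this, deriv_comp_affine (fun y => csub C D y w) (ne_of_gt hΔ) (pP a (i:ℕ)) u]
  ring

/-- derivative formula in the second variable, on open cells -/
lemma d2_patch (ha : IsTransfMatrix a) (hC : IsCopula C) (hD : IsCopula D)
    {i : Fin k} {j : Fin ℓ} {u v : ℝ} (hu : u ∈ Ioo (pP a i) (pP a ((i:ℕ)+1)))
    (hv : v ∈ Ioo (qQ a j) (qQ a ((j:ℕ)+1))) :
    d2 (csub (patch a C) (patch a D)) u v
      = (a i j / (qQ a ((j:ℕ)+1) - qQ a j))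
        * d2 (csub C D) ((u - pP a (i:ℕ)) / (pP a ((i:ℕ)+1) - pP a i))
            ((v - qQ a j) / (qQ a ((j:ℕ)+1) - qQ a j)) := by
  have hΔ : (0:ℝ) < qQ a ((j:ℕ)+1) - qQ a j := sub_pos.2 (qQ_lt_succ ha j)
  set z := (u - pP a (i:ℕ)) / (pP a ((i:ℕ)+1) - pP a i) with hz
  have hFu : Fdist a i u = z := Fdist_eq_ratio ha i hu
  have hev : (fun y => csub (patch a C) (patch a D) u y)
      =ᶠ[nhds v] (fun y => a i j * csub C D z ((y - qQ a j) / (qQ a ((j:ℕ)+1) - qQ a j))) := by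
    filter_upwards [isOpen_Ioo.mem_nhds hv] with y hy
    have h1 := patch_csub_cell ha hC hD hu hy
    have h2 := Gdist_eq_ratio ha j hy
    unfold csub
    rw [h1, h2, hFu]
  unfold d2
  rw [hev.deriv_eq]
  have : deriv (fun y => a i j * csub C D z ((y - qQ a j) / (qQ a ((j:ℕ)+1) - qQ a j))) v
      = a i j * deriv (fun y => (fun y' => csub C D z y') ((y - qQ a j) / (qQ a ((j:ℕ)+1) - qQ a j))) v :=
    deriv_const_mul_field (a i j)
  rw [this, deriv_comp_affine (fun y' => csub C D z y') (ne_of_gt hΔ) (qQ a (j:ℕ)) v]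
  ring

end Deriv
end Stmt13Aux
namespace Stmt13Aux
open Filter MeasureTheory

/-! ### Clamping to the unit square, and measurability/integrability of `d1`, `d2` -/

def clampI (t : ℝ) : ℝ := max 0 (min 1 t)

def clampF (E : ℝ → ℝ → ℝ) : ℝ → ℝ → ℝ := fun u v => E (clampI u) (clampI v)

lemma clampI_mem (t : ℝ) : clampI t ∈ Icc (0:ℝ) 1 :=
  ⟨le_max_left _ _, max_le zero_le_one (min_le_left _ _)⟩

lemma clampI_eq {t : ℝ} (ht : t ∈ Icc (0:ℝ) 1) : clampI t = t := by
  unfold clampI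
  rw [min_eq_right ht.2, max_eq_right ht.1]

lemma abs_min_sub_min (a b c : ℝ) : |min c a - min c b| ≤ |a - b| := by
  have h := abs_max_sub_max_le_abs (-a) (-b) (-c)
  rw [max_neg_neg, max_neg_neg] at h
  calc |min c a - min c b| = |(-(min a c)) - (-(min b c))| := by
        rw [min_comm c a, min_comm c b, ← abs_neg]; ring_nf
    _ ≤ |(-a) - (-b)| := h
    _ = |a - b| := by rw [← abs_neg]; ring_nf

lemma clampI_lip (s t : ℝ) : |clampI s - clampI t| ≤ |s - t| :=
  le_trans (by simpa [clampI, max_comm] using abs_max_sub_max_le_abs (min 1 s) (min 1 t) 0)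
    (abs_min_sub_min s t 1)

section ClampCop
variable {C D : ℝ → ℝ → ℝ}

lemma csub_abs_lip1 (hC : IsCopula C) (hD : IsCopula D) {x y v : ℝ} (hx : x ∈ Icc (0:ℝ) 1)
    (hy : y ∈ Icc (0:ℝ) 1) (hv : v ∈ Icc (0:ℝ) 1) :
    |csub C D x v - csub C D y v| ≤ 2 * |x - y| := by
  have h1 := cop_abs_lip1 hC hx hy hv
  have h2 := cop_abs_lip1 hD hx hy hv
  calc |csub C D x v - csub C D y v| = |(C x v - C y v) - (D x v - D y v)| := by
        unfold csub; ring_nf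
    _ ≤ |C x v - C y v| + |D x v - D y v| := abs_sub _ _
    _ ≤ 2 * |x - y| := by linarith

lemma csub_abs_lip2 (hC : IsCopula C) (hD : IsCopula D) {u x y : ℝ} (hu : u ∈ Icc (0:ℝ) 1)
    (hx : x ∈ Icc (0:ℝ) 1) (hy : y ∈ Icc (0:ℝ) 1) :
    |csub C D u x - csub C D u y| ≤ 2 * |x - y| := by
  have h1 := cop_abs_lip2 hC hu hx hy
  have h2 := cop_abs_lip2 hD hu hx hy
  calc |csub C D u x - csub C D u y| = |(C u x - C u y) - (D u x - D u y)| := by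
        unfold csub; ring_nf
    _ ≤ |C u x - C u y| + |D u x - D u y| := abs_sub _ _
    _ ≤ 2 * |x - y| := by linarith

lemma clampF_cont (hC : IsCopula C) (hD : IsCopula D) :
    Continuous (Function.uncurry (clampF (csub C D))) := by
  apply LipschitzWith.continuous (K := 4)
  apply LipschitzWith.of_dist_le_mul
  intro p q
  have key : |clampF (csub C D) p.1 p.2 - clampF (csub C D) q.1 q.2|
      ≤ 2 * |p.1 - q.1| + 2 * |p.2 - q.2| := by
    have h1 : |csub C D (clampI p.1) (clampI p.2) - csub C D (clampI q.1) (clampI p.2)|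
        ≤ 2 * |p.1 - q.1| :=
      le_trans (csub_abs_lip1 hC hD (clampI_mem _) (clampI_mem _) (clampI_mem _))
        (by have := clampI_lip p.1 q.1; linarith)
    have h2 : |csub C D (clampI q.1) (clampI p.2) - csub C D (clampI q.1) (clampI q.2)|
        ≤ 2 * |p.2 - q.2| :=
      le_trans (csub_abs_lip2 hC hD (clampI_mem _) (clampI_mem _) (clampI_mem _))
        (by have := clampI_lip p.2 q.2; linarith)
    calc |clampF (csub C D) p.1 p.2 - clampF (csub C D) q.1 q.2|
        ≤ |csub C D (clampI p.1) (clampI p.2) - csub C D (clampI q.1) (clampI p.2)|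
          + |csub C D (clampI q.1) (clampI p.2) - csub C D (clampI q.1) (clampI q.2)| := by
          unfold clampF
          exact abs_sub_le _ _ _
      _ ≤ 2 * |p.1 - q.1| + 2 * |p.2 - q.2| := add_le_add h1 h2
  rw [Function.uncurry, Function.uncurry, Real.dist_eq, Prod.dist_eq, Real.dist_eq, Real.dist_eq]
  have hle1 : |p.1 - q.1| ≤ |p.1 - q.1| ⊔ |p.2 - q.2| := le_max_left _ _
  have hle2 : |p.2 - q.2| ≤ |p.1 - q.1| ⊔ |p.2 - q.2| := le_max_right _ _
  have : (((4:NNReal)):ℝ) = 4 := by norm_num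
  rw [this]
  calc |clampF (csub C D) p.1 p.2 - clampF (csub C D) q.1 q.2|
      ≤ 2 * |p.1 - q.1| + 2 * |p.2 - q.2| := key
    _ ≤ 4 * (|p.1 - q.1| ⊔ |p.2 - q.2|) := by linarith

lemma d2_clamp_eq (hu : u ∈ Icc (0:ℝ) 1) (hv : v ∈ Ioo (0:ℝ) 1) :
    d2 (csub C D) u v = d2 (clampF (csub C D)) u v := by
  unfold d2
  apply Filter.EventuallyEq.deriv_eq
  filter_upwards [isOpen_Ioo.mem_nhds hv] with y hy
  unfold clampF
  rw [clampI_eq hu, clampI_eq (Ioo_subset_Icc_self hy)]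

lemma meas_d2_clamp (hC : IsCopula C) (hD : IsCopula D) (v : ℝ) :
    Measurable (fun u => d2 (clampF (csub C D)) u v) := by
  have h := measurable_deriv_with_param (f := clampF (csub C D)) (clampF_cont hC hD)
  exact h.comp (measurable_id.prodMk measurable_const)

/-- interval integrability of `(d1 (C-D))²` over subintervals of `[0,1]`. -/
lemma II_d1sq (hC : IsCopula C) (hD : IsCopula D) {A B v : ℝ} (hAB : A ≤ B)
    (hsub : Ioo A B ⊆ Ioo (0:ℝ) 1) (hv : v ∈ Icc (0:ℝ) 1) :
    IntervalIntegrable (fun u => (d1 (csub C D) u v)^2) volume A B := by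
  apply II_of_bound (M := 4) hAB ((measurable_deriv _).pow_const 2)
  intro x hx
  have h := abs_d1_le hC hD (hsub hx) hv
  calc |(d1 (csub C D) x v)^2| = |d1 (csub C D) x v|^2 := by
        rw [abs_pow, sq_abs, ← sq_abs]
    _ ≤ 2^2 := pow_le_pow_left₀ (abs_nonneg _) h 2
    _ = 4 := by norm_num

/-- interval integrability of `(d2 (C-D))²` over subintervals of `[0,1]`. -/
lemma II_d2sq (hC : IsCopula C) (hD : IsCopula D) {A B v : ℝ} (hAB : A ≤ B)
    (hsub : Icc A B ⊆ Icc (0:ℝ) 1) (hv : v ∈ Ioo (0:ℝ) 1) :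
    IntervalIntegrable (fun u => (d2 (csub C D) u v)^2) volume A B := by
  have hbound : ∀ x ∈ Ioo A B, |(d2 (clampF (csub C D)) x v)^2| ≤ 4 := by
    intro x hx
    have hxI : x ∈ Icc (0:ℝ) 1 := hsub (Ioo_subset_Icc_self hx)
    rw [← d2_clamp_eq hxI hv]
    have h := abs_d2_le hC hD hxI hv
    calc |(d2 (csub C D) x v)^2| = |d2 (csub C D) x v|^2 := by
          rw [abs_pow, sq_abs, ← sq_abs]
      _ ≤ 2^2 := pow_le_pow_left₀ (abs_nonneg _) h 2
      _ = 4 := by norm_num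
  have hclamp : IntervalIntegrable (fun u => (d2 (clampF (csub C D)) u v)^2) volume A B :=
    II_of_bound hAB ((meas_d2_clamp hC hD v).pow_const 2) hbound
  rw [intervalIntegrable_iff_integrableOn_Ioo_of_le hAB] at hclamp ⊢
  apply hclamp.congr_fun ?_ measurableSet_Ioo
  intro x hx
  simp only []
  rw [← d2_clamp_eq (hsub (Ioo_subset_Icc_self hx)) hv]

end ClampCop
end Stmt13Aux
namespace Stmt13Aux
open Filter MeasureTheory

section Inner
variable {k ℓ : ℕ} {a : Fin k → Fin ℓ → ℝ} {C D : ℝ → ℝ → ℝ}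

/-- the L²-contraction coefficient for `∂₁`, per row -/
def betaF (a : Fin k → Fin ℓ → ℝ) (j : Fin ℓ) : ℝ :=
  ∑ i, (a i j)^2 / (pP a ((i:ℕ)+1) - pP a (i:ℕ))

/-- the L²-contraction coefficient for `∂₂`, per row -/
def gammaF (a : Fin k → Fin ℓ → ℝ) (j : Fin ℓ) : ℝ :=
  (∑ i, (a i j)^2 * (pP a ((i:ℕ)+1) - pP a (i:ℕ))) / (qQ a ((j:ℕ)+1) - qQ a (j:ℕ))^2

lemma cell_subset (ha : IsTransfMatrix a) (i : Fin k) :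
    Ioo (pP a (i:ℕ)) (pP a ((i:ℕ)+1)) ⊆ Ioo (0:ℝ) 1 := fun x hx =>
  ⟨lt_of_le_of_lt (pP_nonneg ha _) hx.1, lt_of_lt_of_le hx.2 (pP_le_one ha _)⟩

lemma cell_subset_Icc (ha : IsTransfMatrix a) (i : Fin k) :
    Icc (pP a (i:ℕ)) (pP a ((i:ℕ)+1)) ⊆ Icc (0:ℝ) 1 := fun x hx =>
  ⟨le_trans (pP_nonneg ha _) hx.1, le_trans hx.2 (pP_le_one ha _)⟩

lemma row_subset (ha : IsTransfMatrix a) (j : Fin ℓ) :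
    Ioo (qQ a (j:ℕ)) (qQ a ((j:ℕ)+1)) ⊆ Ioo (0:ℝ) 1 := fun x hx =>
  ⟨lt_of_le_of_lt (qQ_nonneg ha _) hx.1, lt_of_lt_of_le hx.2 (qQ_le_one ha _)⟩

lemma inner1 (ha : IsTransfMatrix a) (hC : IsCopula C) (hD : IsCopula D) {j : Fin ℓ} {v : ℝ}
    (hv : v ∈ Ioo (qQ a (j:ℕ)) (qQ a ((j:ℕ)+1))) :
    ∫ u in (0:ℝ)..1, (d1 (csub (patch a C) (patch a D)) u v)^2
      = betaF a j * ∫ x in (0:ℝ)..1,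
          (d1 (csub C D) x ((v - qQ a (j:ℕ)) / (qQ a ((j:ℕ)+1) - qQ a (j:ℕ))))^2 := by
  set w := (v - qQ a (j:ℕ)) / (qQ a ((j:ℕ)+1) - qQ a (j:ℕ)) with hwdef
  have hw : w ∈ Ioo (0:ℝ) 1 := Gdist_ratio_mem ha j hv
  have hvI : v ∈ Icc (0:ℝ) 1 := Ioo_subset_Icc_self (row_subset ha j hv)
  have hPC := patch_isCopula ha hC
  have hPD := patch_isCopula ha hD
  set K : ℕ → ℝ := fun m => if h : m < k
    then (a ⟨m, h⟩ j / (pP a (m+1) - pP a m))^2 else 0 with hKdef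
  have hcw : ∫ u in (0:ℝ)..1, (d1 (csub (patch a C) (patch a D)) u v)^2
      = ∑ m ∈ Finset.range k, K m * ((pP a (m+1) - pP a m)
          * ∫ x in (0:ℝ)..1, (d1 (csub C D) x w)^2) := by
    apply integral_cellwise pP_zero (pP_total ha)
    · intro m hm
      exact pP_lt_succ ha ⟨m, hm⟩
    · intro m hm
      exact II_d1sq hPC hPD (pP_lt_succ ha ⟨m, hm⟩).le (cell_subset ha ⟨m, hm⟩) hvI
    · intro m hm u hu
      rw [hKdef]
      simp only [dif_pos hm]
      rw [d1_patch ha hC hD (i := ⟨m, hm⟩) hu hv, mul_pow]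
  rw [hcw, ← Fin.sum_univ_eq_sum_range
    (fun m => K m * ((pP a (m+1) - pP a m) * ∫ x in (0:ℝ)..1, (d1 (csub C D) x w)^2)) k]
  unfold betaF
  rw [Finset.sum_mul]
  apply Finset.sum_congr rfl
  intro i _
  have hΔ : (0:ℝ) < pP a ((i:ℕ)+1) - pP a (i:ℕ) := sub_pos.2 (pP_lt_succ ha i)
  rw [hKdef]
  simp only [dif_pos i.isLt, Fin.eta]
  field_simp

lemma inner2 (ha : IsTransfMatrix a) (hC : IsCopula C) (hD : IsCopula D) {j : Fin ℓ} {v : ℝ}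
    (hv : v ∈ Ioo (qQ a (j:ℕ)) (qQ a ((j:ℕ)+1))) :
    ∫ u in (0:ℝ)..1, (d2 (csub (patch a C) (patch a D)) u v)^2
      = gammaF a j * ∫ x in (0:ℝ)..1,
          (d2 (csub C D) x ((v - qQ a (j:ℕ)) / (qQ a ((j:ℕ)+1) - qQ a (j:ℕ))))^2 := by
  set w := (v - qQ a (j:ℕ)) / (qQ a ((j:ℕ)+1) - qQ a (j:ℕ)) with hwdef
  have hw : w ∈ Ioo (0:ℝ) 1 := Gdist_ratio_mem ha j hv
  have hvO : v ∈ Ioo (0:ℝ) 1 := row_subset ha j hv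
  have hPC := patch_isCopula ha hC
  have hPD := patch_isCopula ha hD
  have hΔq : (0:ℝ) < qQ a ((j:ℕ)+1) - qQ a (j:ℕ) := sub_pos.2 (qQ_lt_succ ha j)
  set K : ℕ → ℝ := fun m => if h : m < k
    then (a ⟨m, h⟩ j / (qQ a ((j:ℕ)+1) - qQ a (j:ℕ)))^2 else 0 with hKdef
  have hcw : ∫ u in (0:ℝ)..1, (d2 (csub (patch a C) (patch a D)) u v)^2
      = ∑ m ∈ Finset.range k, K m * ((pP a (m+1) - pP a m)
          * ∫ x in (0:ℝ)..1, (d2 (csub C D) x w)^2) := by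
    apply integral_cellwise pP_zero (pP_total ha)
    · intro m hm
      exact pP_lt_succ ha ⟨m, hm⟩
    · intro m hm
      exact II_d2sq hPC hPD (pP_lt_succ ha ⟨m, hm⟩).le (cell_subset_Icc ha ⟨m, hm⟩) hvO
    · intro m hm u hu
      rw [hKdef]
      simp only [dif_pos hm]
      rw [d2_patch ha hC hD (i := ⟨m, hm⟩) hu hv, mul_pow]
  rw [hcw, ← Fin.sum_univ_eq_sum_range
    (fun m => K m * ((pP a (m+1) - pP a m) * ∫ x in (0:ℝ)..1, (d2 (csub C D) x w)^2)) k]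
  unfold gammaF
  rw [div_mul_eq_mul_div, Finset.sum_mul, Finset.sum_div]
  apply Finset.sum_congr rfl
  intro i _
  rw [hKdef]
  simp only [dif_pos i.isLt, Fin.eta]
  field_simp

end Inner
end Stmt13Aux
namespace Stmt13Aux
open Filter MeasureTheory

section Wt
variable {k ℓ : ℕ} {a : Fin k → Fin ℓ → ℝ} {β : Fin ℓ → ℝ}

/-- the iterated weight function for the cell-wise L² recursion -/
def wtF (a : Fin k → Fin ℓ → ℝ) (β : Fin ℓ → ℝ) : ℕ → ℝ → ℝ
  | 0, _ => 4
  | r+1, v => ∑ j : Fin ℓ, (Ioo (qQ a (j:ℕ)) (qQ a ((j:ℕ)+1))).indicator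
      (fun v' => β j * wtF a β r ((v' - qQ a (j:ℕ)) / (qQ a ((j:ℕ)+1) - qQ a (j:ℕ)))) v

lemma wtF_zero (v : ℝ) : wtF a β 0 v = 4 := rfl

lemma wtF_succ (r : ℕ) (v : ℝ) : wtF a β (r+1) v
    = ∑ j : Fin ℓ, (Ioo (qQ a (j:ℕ)) (qQ a ((j:ℕ)+1))).indicator
      (fun v' => β j * wtF a β r ((v' - qQ a (j:ℕ)) / (qQ a ((j:ℕ)+1) - qQ a (j:ℕ)))) v := rfl

lemma kpos (ha : IsTransfMatrix a) : 0 < k := by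
  rcases Nat.eq_zero_or_pos k with h | h
  · subst h
    simpa using ha.2.1
  · exact h

lemma lpos (ha : IsTransfMatrix a) : 0 < ℓ := by
  rcases Nat.eq_zero_or_pos ℓ with h | h
  · subst h
    simpa using ha.2.1
  · exact h

lemma row_disjoint (ha : IsTransfMatrix a) {j j' : Fin ℓ} (hne : j' ≠ j) {v : ℝ}
    (hv : v ∈ Ioo (qQ a (j:ℕ)) (qQ a ((j:ℕ)+1))) :
    v ∉ Ioo (qQ a (j':ℕ)) (qQ a ((j':ℕ)+1)) := by
  intro hv'
  rcases lt_or_gt_of_ne (fun h => hne (Fin.ext h) : (j':ℕ) ≠ (j:ℕ)) with h | h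
  · have h1 : qQ a ((j':ℕ)+1) ≤ qQ a (j:ℕ) := qQ_mono ha h
    linarith [hv'.2, hv.1]
  · have h1 : qQ a ((j:ℕ)+1) ≤ qQ a (j':ℕ) := qQ_mono ha h
    linarith [hv.2, hv'.1]

lemma wtF_succ_eq (ha : IsTransfMatrix a) {r : ℕ} {j : Fin ℓ} {v : ℝ}
    (hv : v ∈ Ioo (qQ a (j:ℕ)) (qQ a ((j:ℕ)+1))) :
    wtF a β (r+1) v = β j * wtF a β r ((v - qQ a (j:ℕ)) / (qQ a ((j:ℕ)+1) - qQ a (j:ℕ))) := by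
  rw [wtF_succ, Finset.sum_eq_single j]
  · rw [Set.indicator_of_mem hv]
  · intro j' _ hj'
    rw [Set.indicator_of_notMem (row_disjoint ha hj' hv)]
  · intro h; exact absurd (Finset.mem_univ j) h

lemma wtF_succ_zero (ha : IsTransfMatrix a) {r : ℕ} {v : ℝ}
    (h : ∀ j : Fin ℓ, v ∉ Ioo (qQ a (j:ℕ)) (qQ a ((j:ℕ)+1))) : wtF a β (r+1) v = 0 := by
  rw [wtF_succ]
  apply Finset.sum_eq_zero
  intro j _
  rw [Set.indicator_of_notMem (h j)]

lemma wtF_nonneg (hβ0 : ∀ j, 0 ≤ β j) : ∀ r v, 0 ≤ wtF a β r v := by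
  intro r
  induction r with
  | zero => intro v; rw [wtF_zero]; norm_num
  | succ r ih =>
    intro v
    rw [wtF_succ]
    apply Finset.sum_nonneg
    intro j _
    apply Set.indicator_nonneg
    intro v' _
    exact mul_nonneg (hβ0 j) (ih _)

lemma wtF_le_four (ha : IsTransfMatrix a) (hβ0 : ∀ j, 0 ≤ β j) (hβ1 : ∀ j, β j ≤ 1) :
    ∀ r v, wtF a β r v ≤ 4 := by
  intro r
  induction r with
  | zero => intro v; rw [wtF_zero]
  | succ r ih =>
    intro v
    by_cases hex : ∃ j : Fin ℓ, v ∈ Ioo (qQ a (j:ℕ)) (qQ a ((j:ℕ)+1))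
    · obtain ⟨j, hj⟩ := hex
      rw [wtF_succ_eq ha hj]
      calc β j * wtF a β r _ ≤ 1 * 4 :=
            mul_le_mul (hβ1 j) (ih _) (wtF_nonneg hβ0 r _) zero_le_one
        _ = 4 := one_mul 4
    · push_neg at hex
      rw [wtF_succ_zero ha hex]
      norm_num

lemma wtF_meas : ∀ r, Measurable (wtF a β r) := by
  intro r
  induction r with
  | zero => exact measurable_const
  | succ r ih =>
    apply Finset.measurable_sum
    intro j _
    exact Measurable.indicator
      (measurable_const.mul (ih.comp ((measurable_id.sub_const _).div_const _)))
      measurableSet_Ioo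

lemma wtF_II (ha : IsTransfMatrix a) (hβ0 : ∀ j, 0 ≤ β j) (hβ1 : ∀ j, β j ≤ 1)
    {A B : ℝ} (hAB : A ≤ B) (r : ℕ) : IntervalIntegrable (wtF a β r) volume A B := by
  apply II_of_bound (M := 4) hAB (wtF_meas r)
  intro x _
  rw [abs_of_nonneg (wtF_nonneg hβ0 r x)]
  exact wtF_le_four ha hβ0 hβ1 r x

lemma wtF_integral (ha : IsTransfMatrix a) (hβ0 : ∀ j, 0 ≤ β j) (hβ1 : ∀ j, β j ≤ 1) (r : ℕ) :
    ∫ v in (0:ℝ)..1, wtF a β (r+1) v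
      = (∑ j, β j * (qQ a ((j:ℕ)+1) - qQ a (j:ℕ))) * ∫ v in (0:ℝ)..1, wtF a β r v := by
  set K : ℕ → ℝ := fun m => if h : m < ℓ then β ⟨m, h⟩ else 0 with hKdef
  have hcw : ∫ v in (0:ℝ)..1, wtF a β (r+1) v
      = ∑ m ∈ Finset.range ℓ, K m * ((qQ a (m+1) - qQ a m) * ∫ x in (0:ℝ)..1, wtF a β r x) := by
    apply integral_cellwise qQ_zero (qQ_total ha)
    · intro m hm
      exact qQ_lt_succ ha ⟨m, hm⟩
    · intro m hm
      exact wtF_II ha hβ0 hβ1 (qQ_lt_succ ha ⟨m, hm⟩).le (r+1)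
    · intro m hm v hv
      rw [hKdef]
      simp only [dif_pos hm]
      exact wtF_succ_eq ha (j := ⟨m, hm⟩) hv
  rw [hcw, ← Fin.sum_univ_eq_sum_range
    (fun m => K m * ((qQ a (m+1) - qQ a m) * ∫ x in (0:ℝ)..1, wtF a β r x)) ℓ, Finset.sum_mul]
  apply Finset.sum_congr rfl
  intro j _
  rw [hKdef]
  simp only [dif_pos j.isLt, Fin.eta]
  ring

lemma wtF_int_nonneg (hβ0 : ∀ j, 0 ≤ β j) (r : ℕ) : 0 ≤ ∫ v in (0:ℝ)..1, wtF a β r v :=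
  intervalIntegral.integral_nonneg zero_le_one (fun v _ => wtF_nonneg hβ0 r v)

lemma wtF_int_le (ha : IsTransfMatrix a) (hβ0 : ∀ j, 0 ≤ β j) (hβ1 : ∀ j, β j ≤ 1)
    {θ : ℝ} (hθ0 : 0 ≤ θ) (hθ : (∑ j, β j * (qQ a ((j:ℕ)+1) - qQ a (j:ℕ))) ≤ θ) :
    ∀ r, ∫ v in (0:ℝ)..1, wtF a β r v ≤ 4 * θ^r := by
  intro r
  induction r with
  | zero =>
    simp [wtF_zero]
  | succ r ih =>
    rw [wtF_integral ha hβ0 hβ1 r]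
    calc (∑ j, β j * (qQ a ((j:ℕ)+1) - qQ a (j:ℕ))) * ∫ v in (0:ℝ)..1, wtF a β r v
        ≤ θ * (4 * θ^r) := mul_le_mul hθ ih (wtF_int_nonneg hβ0 r) hθ0
      _ = 4 * θ^(r+1) := by ring

lemma exists_row (ha : IsTransfMatrix a) {v : ℝ} (hv : v ∈ Ioo (0:ℝ) 1)
    (hnq : ∀ m : ℕ, v ≠ qQ a m) :
    ∃ j : Fin ℓ, v ∈ Ioo (qQ a (j:ℕ)) (qQ a ((j:ℕ)+1)) := by
  have hl0 : 0 < ℓ := lpos ha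
  set T := (Finset.range ℓ).filter (fun m => qQ a m < v) with hT
  have hTne : T.Nonempty := ⟨0, by
    rw [hT, Finset.mem_filter, Finset.mem_range]
    exact ⟨hl0, by rw [qQ_zero]; exact hv.1⟩⟩
  set j' := T.max' hTne with hj'
  have hj'T : j' ∈ T := T.max'_mem hTne
  rw [hT, Finset.mem_filter, Finset.mem_range] at hj'T
  refine ⟨⟨j', hj'T.1⟩, ⟨hj'T.2, ?_⟩⟩
  by_contra hcon
  push_neg at hcon
  have hlt : qQ a (j'+1) < v := lt_of_le_of_ne hcon (Ne.symm (hnq (j'+1)))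
  by_cases hcase : j' + 1 < ℓ
  · have : j' + 1 ∈ T := by
      rw [hT, Finset.mem_filter, Finset.mem_range]
      exact ⟨hcase, hlt⟩
    have := Finset.le_max' T _ this
    omega
  · push_neg at hcase
    have h1 : qQ a ℓ ≤ qQ a (j'+1) := qQ_mono ha hcase
    rw [qQ_total ha] at h1
    linarith [hv.2]

/-- the master induction: iterated inner-integral bound off a countable bad set -/
lemma master (ha : IsTransfMatrix a) (hβ0 : ∀ j, 0 ≤ β j)
    (Φ : (ℝ → ℝ → ℝ) → ℝ → ℝ → ℝ)
    (hbase : ∀ C D : ℝ → ℝ → ℝ, IsCopula C → IsCopula D → ∀ v ∈ Ioo (0:ℝ) 1,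
      ∫ u in (0:ℝ)..1, Φ (csub C D) u v ≤ 4)
    (hrec : ∀ C D : ℝ → ℝ → ℝ, IsCopula C → IsCopula D → ∀ j : Fin ℓ,
      ∀ v ∈ Ioo (qQ a (j:ℕ)) (qQ a ((j:ℕ)+1)),
      ∫ u in (0:ℝ)..1, Φ (csub (patch a C) (patch a D)) u v
        = β j * ∫ x in (0:ℝ)..1, Φ (csub C D) x ((v - qQ a (j:ℕ)) / (qQ a ((j:ℕ)+1) - qQ a (j:ℕ)))) :
    ∀ r : ℕ, ∃ S : Set ℝ, S.Countable ∧ ∀ C D : ℝ → ℝ → ℝ, IsCopula C → IsCopula D →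
      ∀ v ∈ Ioo (0:ℝ) 1, v ∉ S →
      ∫ u in (0:ℝ)..1, Φ (csub ((patch a)^[r] C) ((patch a)^[r] D)) u v ≤ wtF a β r v := by
  intro r
  induction r with
  | zero =>
    refine ⟨∅, Set.countable_empty, ?_⟩
    intro C D hC hD v hv _
    rw [wtF_zero]
    exact hbase C D hC hD v hv
  | succ r ih =>
    obtain ⟨S, hS, hIH⟩ := ih
    refine ⟨(⋃ m : ℕ, {qQ a m}) ∪ ⋃ j : Fin ℓ,
      (fun v => (v - qQ a (j:ℕ)) / (qQ a ((j:ℕ)+1) - qQ a (j:ℕ))) ⁻¹' S, ?_, ?_⟩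
    · apply Set.Countable.union
      · exact Set.countable_iUnion (fun m => Set.countable_singleton _)
      · apply Set.countable_iUnion
        intro j
        apply hS.preimage
        intro x y hxy
        have hΔ : (0:ℝ) < qQ a ((j:ℕ)+1) - qQ a (j:ℕ) := sub_pos.2 (qQ_lt_succ ha j)
        field_simp at hxy
        linarith
    · intro C D hC hD v hv hvS
      have hnq : ∀ m : ℕ, v ≠ qQ a m := by
        intro m he
        exact hvS (Set.mem_union_left _ (Set.mem_iUnion.2 ⟨m, by rw [he]; rfl⟩))
      obtain ⟨j, hj⟩ := exists_row ha hv hnq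
      have hwS : (v - qQ a (j:ℕ)) / (qQ a ((j:ℕ)+1) - qQ a (j:ℕ)) ∉ S := by
        intro hmem
        exact hvS (Set.mem_union_right _ (Set.mem_iUnion.2 ⟨j, hmem⟩))
      have hw : (v - qQ a (j:ℕ)) / (qQ a ((j:ℕ)+1) - qQ a (j:ℕ)) ∈ Ioo (0:ℝ) 1 :=
        Gdist_ratio_mem ha j hj
      simp only [Function.iterate_succ_apply']
      rw [hrec ((patch a)^[r] C) ((patch a)^[r] D) (iter_isCopula ha hC r)
        (iter_isCopula ha hD r) j v hj]
      calc β j * ∫ x in (0:ℝ)..1, Φ (csub ((patch a)^[r] C) ((patch a)^[r] D)) x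
            ((v - qQ a (j:ℕ)) / (qQ a ((j:ℕ)+1) - qQ a (j:ℕ)))
          ≤ β j * wtF a β r ((v - qQ a (j:ℕ)) / (qQ a ((j:ℕ)+1) - qQ a (j:ℕ))) :=
            mul_le_mul_of_nonneg_left
              (hIH C D hC hD _ hw hwS) (hβ0 j)
        _ = wtF a β (r+1) v := (wtF_succ_eq ha hj).symm

end Wt
end Stmt13Aux
namespace Stmt13Aux
open Filter MeasureTheory

section Coef
variable {k ℓ : ℕ} {a : Fin k → Fin ℓ → ℝ}

lemma rowsum_eq (i : Fin k) : pP a ((i:ℕ)+1) - pP a (i:ℕ) = ∑ j, a i j := by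
  rw [pP_succ]; ring

lemma colsum_eq (j : Fin ℓ) : qQ a ((j:ℕ)+1) - qQ a (j:ℕ) = ∑ i, a i j := by
  rw [qQ_succ]; ring

lemma a_le_dp (ha : IsTransfMatrix a) (i : Fin k) (j : Fin ℓ) :
    a i j ≤ pP a ((i:ℕ)+1) - pP a (i:ℕ) := by
  rw [rowsum_eq]
  exact Finset.single_le_sum (fun j' _ => ha.1 i j') (Finset.mem_univ j)

lemma a_le_dq (ha : IsTransfMatrix a) (i : Fin k) (j : Fin ℓ) :
    a i j ≤ qQ a ((j:ℕ)+1) - qQ a (j:ℕ) := by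
  rw [colsum_eq]
  exact Finset.single_le_sum (fun i' _ => ha.1 i' j) (Finset.mem_univ i)

lemma dp_le_one (ha : IsTransfMatrix a) (i : Fin k) :
    pP a ((i:ℕ)+1) - pP a (i:ℕ) ≤ 1 := by
  have h1 := pP_le_one ha ((i:ℕ)+1)
  have h2 := pP_nonneg ha (i:ℕ)
  linarith

lemma dq_le_one (ha : IsTransfMatrix a) (j : Fin ℓ) :
    qQ a ((j:ℕ)+1) - qQ a (j:ℕ) ≤ 1 := by
  have h1 := qQ_le_one ha ((j:ℕ)+1)
  have h2 := qQ_nonneg ha (j:ℕ)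
  linarith

lemma betaF_nonneg (ha : IsTransfMatrix a) (j : Fin ℓ) : 0 ≤ betaF a j :=
  Finset.sum_nonneg fun i _ => div_nonneg (sq_nonneg _) (sub_pos.2 (pP_lt_succ ha i)).le

lemma betaF_le_dq (ha : IsTransfMatrix a) (j : Fin ℓ) :
    betaF a j ≤ qQ a ((j:ℕ)+1) - qQ a (j:ℕ) := by
  rw [colsum_eq]
  apply Finset.sum_le_sum
  intro i _
  have hΔ : (0:ℝ) < pP a ((i:ℕ)+1) - pP a (i:ℕ) := sub_pos.2 (pP_lt_succ ha i)
  rw [div_le_iff₀ hΔ]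
  calc (a i j)^2 = a i j * a i j := sq (a i j) ▸ rfl
    _ ≤ a i j * (pP a ((i:ℕ)+1) - pP a (i:ℕ)) :=
        mul_le_mul_of_nonneg_left (a_le_dp ha i j) (ha.1 i j)

lemma betaF_le_one (ha : IsTransfMatrix a) (j : Fin ℓ) : betaF a j ≤ 1 :=
  (betaF_le_dq ha j).trans (dq_le_one ha j)

lemma gammaF_nonneg (ha : IsTransfMatrix a) (j : Fin ℓ) : 0 ≤ gammaF a j :=
  div_nonneg (Finset.sum_nonneg fun i _ =>
    mul_nonneg (sq_nonneg _) (sub_pos.2 (pP_lt_succ ha i)).le) (sq_nonneg _)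

lemma gammaF_num_le (ha : IsTransfMatrix a) (j : Fin ℓ) :
    ∑ i, (a i j)^2 * (pP a ((i:ℕ)+1) - pP a (i:ℕ)) ≤ (qQ a ((j:ℕ)+1) - qQ a (j:ℕ))^2 := by
  have hΔq : (0:ℝ) < qQ a ((j:ℕ)+1) - qQ a (j:ℕ) := sub_pos.2 (qQ_lt_succ ha j)
  calc ∑ i, (a i j)^2 * (pP a ((i:ℕ)+1) - pP a (i:ℕ))
      ≤ ∑ i, (qQ a ((j:ℕ)+1) - qQ a (j:ℕ)) * a i j := by
        apply Finset.sum_le_sum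
        intro i _
        have h1 : (a i j)^2 ≤ (qQ a ((j:ℕ)+1) - qQ a (j:ℕ)) * a i j := by
          rw [sq]
          exact mul_le_mul_of_nonneg_right (a_le_dq ha i j) (ha.1 i j)
        calc (a i j)^2 * (pP a ((i:ℕ)+1) - pP a (i:ℕ)) ≤ (a i j)^2 * 1 :=
              mul_le_mul_of_nonneg_left (dp_le_one ha i) (sq_nonneg _)
          _ = (a i j)^2 := mul_one _
          _ ≤ (qQ a ((j:ℕ)+1) - qQ a (j:ℕ)) * a i j := h1
    _ = (qQ a ((j:ℕ)+1) - qQ a (j:ℕ)) * ∑ i, a i j := by rw [Finset.mul_sum]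
    _ = (qQ a ((j:ℕ)+1) - qQ a (j:ℕ))^2 := by rw [← colsum_eq, sq]

lemma gammaF_le_one (ha : IsTransfMatrix a) (j : Fin ℓ) : gammaF a j ≤ 1 := by
  unfold gammaF
  have hΔq : (0:ℝ) < qQ a ((j:ℕ)+1) - qQ a (j:ℕ) := sub_pos.2 (qQ_lt_succ ha j)
  rw [div_le_one (pow_pos hΔq 2)]
  exact gammaF_num_le ha j

lemma sum_dq_one (ha : IsTransfMatrix a) :
    ∑ j : Fin ℓ, (qQ a ((j:ℕ)+1) - qQ a (j:ℕ)) = 1 := by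
  rw [Fin.sum_univ_eq_sum_range (fun m => qQ a (m+1) - qQ a m) ℓ,
    Finset.sum_range_sub (fun m => qQ a m) ℓ, qQ_zero, qQ_total ha, sub_zero]

lemma sum_dp_one (ha : IsTransfMatrix a) :
    ∑ i : Fin k, (pP a ((i:ℕ)+1) - pP a (i:ℕ)) = 1 := by
  rw [Fin.sum_univ_eq_sum_range (fun m => pP a (m+1) - pP a m) k,
    Finset.sum_range_sub (fun m => pP a m) k, pP_zero, pP_total ha, sub_zero]

lemma dq_lt_one (hℓ : 2 ≤ ℓ) (ha : IsTransfMatrix a) (j : Fin ℓ) :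
    qQ a ((j:ℕ)+1) - qQ a (j:ℕ) < 1 := by
  have : ∃ j2 : Fin ℓ, j2 ≠ j := by
    by_cases h0 : (j : ℕ) = 0
    · exact ⟨⟨1, by omega⟩, fun h => by simp [Fin.ext_iff, h0] at h⟩
    · exact ⟨⟨0, by omega⟩, fun h => h0 (by simpa [Fin.ext_iff] using h.symm)⟩
  obtain ⟨j2, hj2⟩ := this
  have hpos : 0 < qQ a ((j2:ℕ)+1) - qQ a (j2:ℕ) := sub_pos.2 (qQ_lt_succ ha j2)
  have hsum : (qQ a ((j:ℕ)+1) - qQ a (j:ℕ)) + (qQ a ((j2:ℕ)+1) - qQ a (j2:ℕ))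
      ≤ ∑ j' : Fin ℓ, (qQ a ((j':ℕ)+1) - qQ a (j':ℕ)) :=
    Finset.add_le_sum (fun j' _ => (sub_pos.2 (qQ_lt_succ ha j')).le)
      (Finset.mem_univ j) (Finset.mem_univ j2) (Ne.symm hj2)
  rw [sum_dq_one ha] at hsum
  linarith

lemma dp_lt_one (hk : 2 ≤ k) (ha : IsTransfMatrix a) (i : Fin k) :
    pP a ((i:ℕ)+1) - pP a (i:ℕ) < 1 :=
  dq_lt_one hk (transpose_transf ha) i

lemma sum_dq_sq_lt_one (hℓ : 2 ≤ ℓ) (ha : IsTransfMatrix a) :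
    ∑ j : Fin ℓ, (qQ a ((j:ℕ)+1) - qQ a (j:ℕ))^2 < 1 := by
  have hne : (Finset.univ : Finset (Fin ℓ)).Nonempty :=
    ⟨⟨0, by omega⟩, Finset.mem_univ _⟩
  calc ∑ j : Fin ℓ, (qQ a ((j:ℕ)+1) - qQ a (j:ℕ))^2
      < ∑ j : Fin ℓ, (qQ a ((j:ℕ)+1) - qQ a (j:ℕ)) := by
        apply Finset.sum_lt_sum_of_nonempty hne
        intro j _
        have h1 : 0 < qQ a ((j:ℕ)+1) - qQ a (j:ℕ) := sub_pos.2 (qQ_lt_succ ha j)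
        have h2 := dq_lt_one hℓ ha j
        nlinarith
    _ = 1 := sum_dq_one ha

lemma sum_dp_sq_lt_one (hk : 2 ≤ k) (ha : IsTransfMatrix a) :
    ∑ i : Fin k, (pP a ((i:ℕ)+1) - pP a (i:ℕ))^2 < 1 :=
  sum_dq_sq_lt_one hk (transpose_transf ha)

lemma sum_beta_dq_le (ha : IsTransfMatrix a) :
    ∑ j, betaF a j * (qQ a ((j:ℕ)+1) - qQ a (j:ℕ))
      ≤ ∑ j : Fin ℓ, (qQ a ((j:ℕ)+1) - qQ a (j:ℕ))^2 := by
  apply Finset.sum_le_sum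
  intro j _
  rw [sq]
  exact mul_le_mul_of_nonneg_right (betaF_le_dq ha j) (sub_pos.2 (qQ_lt_succ ha j)).le

lemma sum_gamma_dq_le (ha : IsTransfMatrix a) :
    ∑ j, gammaF a j * (qQ a ((j:ℕ)+1) - qQ a (j:ℕ))
      ≤ ∑ i : Fin k, (pP a ((i:ℕ)+1) - pP a (i:ℕ))^2 := by
  have step : ∀ j : Fin ℓ, gammaF a j * (qQ a ((j:ℕ)+1) - qQ a (j:ℕ))
      ≤ ∑ i, a i j * (pP a ((i:ℕ)+1) - pP a (i:ℕ)) := by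
    intro j
    have hΔq : (0:ℝ) < qQ a ((j:ℕ)+1) - qQ a (j:ℕ) := sub_pos.2 (qQ_lt_succ ha j)
    unfold gammaF
    have hgoal : (∑ i, (a i j)^2 * (pP a ((i:ℕ)+1) - pP a (i:ℕ))) / (qQ a ((j:ℕ)+1) - qQ a (j:ℕ))^2
        * (qQ a ((j:ℕ)+1) - qQ a (j:ℕ))
        = (∑ i, (a i j)^2 * (pP a ((i:ℕ)+1) - pP a (i:ℕ))) / (qQ a ((j:ℕ)+1) - qQ a (j:ℕ)) := by
      field_simp
    rw [hgoal, div_le_iff₀ hΔq]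
    calc ∑ i, (a i j)^2 * (pP a ((i:ℕ)+1) - pP a (i:ℕ))
        ≤ ∑ i, (a i j * (pP a ((i:ℕ)+1) - pP a (i:ℕ))) * (qQ a ((j:ℕ)+1) - qQ a (j:ℕ)) := by
          apply Finset.sum_le_sum
          intro i _
          have hdp : (0:ℝ) ≤ pP a ((i:ℕ)+1) - pP a (i:ℕ) := (sub_pos.2 (pP_lt_succ ha i)).le
          calc (a i j)^2 * (pP a ((i:ℕ)+1) - pP a (i:ℕ))
              = (a i j * (pP a ((i:ℕ)+1) - pP a (i:ℕ))) * a i j := by ring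
            _ ≤ (a i j * (pP a ((i:ℕ)+1) - pP a (i:ℕ))) * (qQ a ((j:ℕ)+1) - qQ a (j:ℕ)) :=
                mul_le_mul_of_nonneg_left (a_le_dq ha i j) (mul_nonneg (ha.1 i j) hdp)
      _ = (∑ i, a i j * (pP a ((i:ℕ)+1) - pP a (i:ℕ))) * (qQ a ((j:ℕ)+1) - qQ a (j:ℕ)) := by
          rw [Finset.sum_mul]
  calc ∑ j, gammaF a j * (qQ a ((j:ℕ)+1) - qQ a (j:ℕ))
      ≤ ∑ j, ∑ i, a i j * (pP a ((i:ℕ)+1) - pP a (i:ℕ)) :=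
        Finset.sum_le_sum fun j _ => step j
    _ = ∑ i : Fin k, (∑ j, a i j) * (pP a ((i:ℕ)+1) - pP a (i:ℕ)) := by
        rw [Finset.sum_comm]
        apply Finset.sum_congr rfl
        intro i _
        rw [Finset.sum_mul]
    _ = ∑ i : Fin k, (pP a ((i:ℕ)+1) - pP a (i:ℕ))^2 := by
        apply Finset.sum_congr rfl
        intro i _
        rw [← rowsum_eq, sq]

end Coef
end Stmt13Aux
namespace Stmt13Aux
open Filter MeasureTheory

lemma integral_le_of_offS {f g : ℝ → ℝ} {S : Set ℝ} (hS : S.Countable)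
    (hf : IntervalIntegrable f volume 0 1) (hg : IntervalIntegrable g volume 0 1)
    (h : ∀ x ∈ Ioo (0:ℝ) 1, x ∉ S → f x ≤ g x) :
    ∫ x in (0:ℝ)..1, f x ≤ ∫ x in (0:ℝ)..1, g x := by
  apply intervalIntegral.integral_mono_ae_restrict zero_le_one hf hg
  rw [Filter.EventuallyLE, MeasureTheory.ae_restrict_iff' measurableSet_Icc]
  rw [MeasureTheory.ae_iff]
  have hnull : MeasureTheory.volume (S ∪ ({0, 1} : Set ℝ)) = 0 :=
    MeasureTheory.measure_union_null (hS.measure_zero _) ((Set.toFinite _).measure_zero _)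
  apply MeasureTheory.measure_mono_null ?_ hnull
  · intro x hx
    simp only [Set.mem_setOf_eq, Classical.not_imp] at hx
    obtain ⟨hx1, hx2⟩ := hx
    by_contra hcon
    rw [Set.mem_union] at hcon
    push_neg at hcon
    have hxS : x ∉ S := hcon.1
    have hx0 : x ≠ 0 := by intro he; exact hcon.2 (by rw [he]; exact Set.mem_insert _ _)
    have hx1' : x ≠ 1 := by
      intro he; exact hcon.2 (by rw [he]; exact Set.mem_insert_of_mem _ rfl)
    have hxIoo : x ∈ Ioo (0:ℝ) 1 :=
      ⟨lt_of_le_of_ne hx1.1 (Ne.symm hx0), lt_of_le_of_ne hx1.2 hx1'⟩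
    exact hx2 (h x hxIoo hxS)

section Base
variable {C D : ℝ → ℝ → ℝ}

lemma base1 (hC : IsCopula C) (hD : IsCopula D) {v : ℝ} (hv : v ∈ Ioo (0:ℝ) 1) :
    ∫ u in (0:ℝ)..1, (d1 (csub C D) u v)^2 ≤ 4 := by
  have hInt := II_d1sq hC hD zero_le_one (subset_refl _) (Ioo_subset_Icc_self hv)
  have hle : ∫ u in (0:ℝ)..1, (d1 (csub C D) u v)^2 ≤ ∫ _x in (0:ℝ)..1, (4:ℝ) := by
    apply integral_le_of_offS Set.countable_empty hInt intervalIntegrable_const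
    intro x hx _
    have h := abs_d1_le hC hD hx (Ioo_subset_Icc_self hv)
    calc (d1 (csub C D) x v)^2 = |d1 (csub C D) x v|^2 := (sq_abs _).symm
      _ ≤ 2^2 := pow_le_pow_left₀ (abs_nonneg _) h 2
      _ = 4 := by norm_num
  simpa using hle

lemma base2 (hC : IsCopula C) (hD : IsCopula D) {v : ℝ} (hv : v ∈ Ioo (0:ℝ) 1) :
    ∫ u in (0:ℝ)..1, (d2 (csub C D) u v)^2 ≤ 4 := by
  have hInt := II_d2sq hC hD zero_le_one (subset_refl _) hv
  have hle : ∫ u in (0:ℝ)..1, (d2 (csub C D) u v)^2 ≤ ∫ _x in (0:ℝ)..1, (4:ℝ) := by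
    apply integral_le_of_offS Set.countable_empty hInt intervalIntegrable_const
    intro x hx _
    have h := abs_d2_le hC hD (Ioo_subset_Icc_self hx) hv
    calc (d2 (csub C D) x v)^2 = |d2 (csub C D) x v|^2 := (sq_abs _).symm
      _ ≤ 2^2 := pow_le_pow_left₀ (abs_nonneg _) h 2
      _ = 4 := by norm_num
  simpa using hle

end Base

lemma sobSq1_congr {E₁ E₂ : ℝ → ℝ → ℝ}
    (h : ∀ x ∈ Ioo (0:ℝ) 1, ∀ y ∈ Ioo (0:ℝ) 1, E₁ x y = E₂ x y) :
    sobSq1 E₁ = sobSq1 E₂ := by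
  unfold sobSq1
  apply integral_congr_Ioo zero_le_one
  intro v hv
  apply integral_congr_Ioo zero_le_one
  intro u hu
  have : d1 E₁ u v = d1 E₂ u v := by
    unfold d1
    apply Filter.EventuallyEq.deriv_eq
    filter_upwards [isOpen_Ioo.mem_nhds hu] with x hx
    exact h x hx v hv
  rw [this]

lemma sobSq2_congr {E₁ E₂ : ℝ → ℝ → ℝ}
    (h : ∀ x ∈ Ioo (0:ℝ) 1, ∀ y ∈ Ioo (0:ℝ) 1, E₁ x y = E₂ x y) :
    sobSq2 E₁ = sobSq2 E₂ := by
  unfold sobSq2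
  apply integral_congr_Ioo zero_le_one
  intro v hv
  apply integral_congr_Ioo zero_le_one
  intro u hu
  have : d2 E₁ u v = d2 E₂ u v := by
    unfold d2
    apply Filter.EventuallyEq.deriv_eq
    filter_upwards [isOpen_Ioo.mem_nhds hv] with y hy
    exact h u hu y hy
  rw [this]

lemma sobSq1_nonneg (E : ℝ → ℝ → ℝ) : 0 ≤ sobSq1 E := by
  apply intervalIntegral.integral_nonneg zero_le_one
  intro v _
  exact intervalIntegral.integral_nonneg zero_le_one (fun u _ => sq_nonneg _)

lemma sobSq2_nonneg (E : ℝ → ℝ → ℝ) : 0 ≤ sobSq2 E := by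
  apply intervalIntegral.integral_nonneg zero_le_one
  intro v _
  exact intervalIntegral.integral_nonneg zero_le_one (fun u _ => sq_nonneg _)

section Conv
variable {k ℓ : ℕ} {a : Fin k → Fin ℓ → ℝ}

lemma sob_conv (hk : 2 ≤ k) (hℓ : 2 ≤ ℓ) (ha : IsTransfMatrix a)
    {D : ℝ → ℝ → ℝ} (hD : IsCopula D) :
    Filter.Tendsto (fun r : ℕ => sobNorm (csub ((patch a)^[r] D) (CAfun a)))
      Filter.atTop (nhds 0) := by
  have hCA := CA_isCopula hk ha
  set θ : ℝ := max (∑ j : Fin ℓ, (qQ a ((j:ℕ)+1) - qQ a (j:ℕ))^2)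
    (∑ i : Fin k, (pP a ((i:ℕ)+1) - pP a (i:ℕ))^2) with hθdef
  have hθ0 : 0 ≤ θ := le_trans (Finset.sum_nonneg fun j _ => sq_nonneg _) (le_max_left _ _)
  have hθ1 : θ < 1 := max_lt (sum_dq_sq_lt_one hℓ ha) (sum_dp_sq_lt_one hk ha)
  have hbsum : (∑ j, betaF a j * (qQ a ((j:ℕ)+1) - qQ a (j:ℕ))) ≤ θ :=
    le_trans (sum_beta_dq_le ha) (le_max_left _ _)
  have hgsum : (∑ j, gammaF a j * (qQ a ((j:ℕ)+1) - qQ a (j:ℕ))) ≤ θ :=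
    le_trans (sum_gamma_dq_le ha) (le_max_right _ _)
  have hm1 := master (β := betaF a) ha (betaF_nonneg ha)
    (fun E u v => (d1 E u v)^2)
    (fun C' D' hC' hD' v hv => base1 hC' hD' hv)
    (fun C' D' hC' hD' j v hv => inner1 ha hC' hD' hv)
  have hm2 := master (β := gammaF a) ha (gammaF_nonneg ha)
    (fun E u v => (d2 E u v)^2)
    (fun C' D' hC' hD' v hv => base2 hC' hD' hv)
    (fun C' D' hC' hD' j v hv => inner2 ha hC' hD' hv)
  have hcongr : ∀ r : ℕ, ∀ x ∈ Ioo (0:ℝ) 1, ∀ y ∈ Ioo (0:ℝ) 1,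
      csub ((patch a)^[r] D) (CAfun a) x y
        = csub ((patch a)^[r] D) ((patch a)^[r] (CAfun a)) x y := by
    intro r x hx y hy
    unfold csub
    rw [iter_CA_eq hk ha r (Ioo_subset_Icc_self hx) (Ioo_subset_Icc_self hy)]
  -- the two key square-norm bounds
  have key1 : ∀ r : ℕ, sobSq1 (csub ((patch a)^[r] D) (CAfun a)) ≤ 4 * θ^r := by
    intro r
    rw [sobSq1_congr (hcongr r)]
    obtain ⟨S, hS, hb⟩ := hm1 r
    unfold sobSq1
    by_cases hint : IntervalIntegrable
        (fun v => ∫ u in (0:ℝ)..1,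
          (d1 (csub ((patch a)^[r] D) ((patch a)^[r] (CAfun a))) u v)^2) volume 0 1
    · calc ∫ v in (0:ℝ)..1, ∫ u in (0:ℝ)..1,
            (d1 (csub ((patch a)^[r] D) ((patch a)^[r] (CAfun a))) u v)^2
          ≤ ∫ v in (0:ℝ)..1, wtF a (betaF a) r v := by
            apply integral_le_of_offS hS hint
              (wtF_II ha (betaF_nonneg ha) (betaF_le_one ha) zero_le_one r)
            intro v hv hvS
            exact hb D (CAfun a) hD hCA v hv hvS
        _ ≤ 4 * θ^r := wtF_int_le ha (betaF_nonneg ha) (betaF_le_one ha) hθ0 hbsum r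
    · rw [intervalIntegral.integral_undef hint]
      positivity
  have key2 : ∀ r : ℕ, sobSq2 (csub ((patch a)^[r] D) (CAfun a)) ≤ 4 * θ^r := by
    intro r
    rw [sobSq2_congr (hcongr r)]
    obtain ⟨S, hS, hb⟩ := hm2 r
    unfold sobSq2
    by_cases hint : IntervalIntegrable
        (fun v => ∫ u in (0:ℝ)..1,
          (d2 (csub ((patch a)^[r] D) ((patch a)^[r] (CAfun a))) u v)^2) volume 0 1
    · calc ∫ v in (0:ℝ)..1, ∫ u in (0:ℝ)..1,
            (d2 (csub ((patch a)^[r] D) ((patch a)^[r] (CAfun a))) u v)^2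
          ≤ ∫ v in (0:ℝ)..1, wtF a (gammaF a) r v := by
            apply integral_le_of_offS hS hint
              (wtF_II ha (gammaF_nonneg ha) (gammaF_le_one ha) zero_le_one r)
            intro v hv hvS
            exact hb D (CAfun a) hD hCA v hv hvS
        _ ≤ 4 * θ^r := wtF_int_le ha (gammaF_nonneg ha) (gammaF_le_one ha) hθ0 hgsum r
    · rw [intervalIntegral.integral_undef hint]
      positivity
  -- squeeze
  apply squeeze_zero (g := fun r => Real.sqrt (8 * θ^r))
  · intro r
    exact Real.sqrt_nonneg _
  · intro r
    unfold sobNorm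
    apply Real.sqrt_le_sqrt
    have := key1 r
    have := key2 r
    linarith
  · have h8 : Filter.Tendsto (fun r : ℕ => 8 * θ^r) Filter.atTop (nhds 0) := by
      have := (tendsto_pow_atTop_nhds_zero_of_lt_one hθ0 hθ1).const_mul (8:ℝ)
      simpa using this
    have hcomp := (Real.continuous_sqrt.tendsto 0).comp h8
    rw [Real.sqrt_zero] at hcomp
    exact hcomp

end Conv
end Stmt13Aux

/-- Let `A` be a `k × ℓ` transformation matrix with `k, ℓ ≥ 2`.  Then there
exists a unique copula `C_A` with `[A](C_A) = C_A` (on the unit square), and for every copula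
`D` the iterates `[A]^r(D)` converge to `C_A` in the modified Sobolev norm. -/
theorem stmt13 {k ℓ : ℕ} (hk : 2 ≤ k) (hℓ : 2 ≤ ℓ)
    (a : Fin k → Fin ℓ → ℝ) (ha : IsTransfMatrix a) :
    ∃ CA : ℝ → ℝ → ℝ, IsCopula CA ∧
      (∀ u ∈ Icc (0:ℝ) 1, ∀ v ∈ Icc (0:ℝ) 1, patch a CA u v = CA u v) ∧
      (∀ C' : ℝ → ℝ → ℝ, IsCopula C' →
        (∀ u ∈ Icc (0:ℝ) 1, ∀ v ∈ Icc (0:ℝ) 1, patch a C' u v = C' u v) →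
        ∀ u ∈ Icc (0:ℝ) 1, ∀ v ∈ Icc (0:ℝ) 1, C' u v = CA u v) ∧
      (∀ D : ℝ → ℝ → ℝ, IsCopula D →
        Filter.Tendsto (fun r : ℕ => sobNorm (csub ((patch a)^[r] D) CA))
          Filter.atTop (nhds 0)) := by
  refine ⟨Stmt13Aux.CAfun a, Stmt13Aux.CA_isCopula hk ha, ?_, ?_, ?_⟩
  · intro u hu v hv
    exact Stmt13Aux.CA_fixed hk ha hu hv
  · intro C' hC' hfix u hu v hv
    exact Stmt13Aux.CA_unique hk ha hC' hfix hu hv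
  · intro D hD
    exact Stmt13Aux.sob_conv hk hℓ ha hD
end
end

section
/- Let A = [a_{ij}] be a k × ℓ transformation matrix, let T and T′ be Markov operators on L¹([0,1], λ) such that T′ is the A-patching of T, and let (I,J) be an invariant pair of A. If S, R ⊆ [0,1] are Borel sets with T𝟙_S = 𝟙_R λ-a.e., then T′𝟙_{S′} = 𝟙_{R′} λ-a.e., where S′ = ⋃_{j∈J} (q_{j−1} + Δq_j·S) and R′ = ⋃_{i∈I} (p_{i−1} + Δp_i·R) (the affine images; modulo λ-null sets these equal ⋃_{j∈J} G_j⁻¹(S) and ⋃_{i∈I} F_i⁻¹(R)). -/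
open MeasureTheory Set unitInterval

noncomputable section

open Classical in
/-- The indicator function `𝟙_S` of a set `S ⊆ [0,1]`, as an element of `L¹([0,1], λ)`
(where `λ` is Lebesgue measure on the unit interval `I = [0,1]`).
If `S` is not measurable we default to `0`. -/
def ind (S : Set I) : Lp ℝ 1 (volume : Measure I) :=
  if hS : MeasurableSet S then indicatorConstLp 1 hS (measure_ne_top _ _) (1:ℝ) else 0

/-- A Markov operator on `L¹([0,1], λ)`: a bounded linear operator `T` with
(i) `T𝟙 = 𝟙`, (ii) `∫ Tψ = ∫ ψ` for all `ψ ∈ L¹`, (iii) `Tψ ≥ 0` a.e. whenever `ψ ≥ 0` a.e. -/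
structure IsMarkovOperator
    (T : Lp ℝ 1 (volume : Measure I) →L[ℝ] Lp ℝ 1 (volume : Measure I)) : Prop where
  map_one : T (ind univ) = ind univ
  integral_map : ∀ ψ : Lp ℝ 1 (volume : Measure I), ∫ x, (T ψ) x = ∫ x, ψ x
  positive : ∀ ψ : Lp ℝ 1 (volume : Measure I), 0 ≤ᵐ[volume] ⇑ψ → 0 ≤ᵐ[volume] ⇑(T ψ)

/-- Clamp a real number into the unit interval. -/
def toI (x : ℝ) : I := ⟨min 1 (max 0 x), le_min zero_le_one (le_max_left 0 x), min_le_left _ _⟩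

/-- The uniform distribution function `F_i(u) = min(1, (u − p_{i−1})/Δp_i)·𝟙_{(p_{i−1},∞)}(u)`
on `[p_{i−1}, p_i]`, as a map `[0,1] → [0,1]` (for `i : Fin k`, `p_{i−1} = pP a i` and
`p_i = pP a (i+1)`). -/
def FdistI {k ℓ : ℕ} (a : Fin k → Fin ℓ → ℝ) (i : Fin k) (x : I) : I :=
  toI (if pP a (i : ℕ) < (x : ℝ) then
    min 1 (((x : ℝ) - pP a (i : ℕ)) / (pP a ((i : ℕ) + 1) - pP a (i : ℕ))) else 0)

/-- The affine map `G̃_j(s) = q_{j−1} + s·Δq_j` of `[0,1]` onto `[q_{j−1}, q_j]`. -/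
def Gtilde {k ℓ : ℕ} (a : Fin k → Fin ℓ → ℝ) (j : Fin ℓ) (x : I) : I :=
  toI (qQ a (j : ℕ) + (x : ℝ) * (qQ a ((j : ℕ) + 1) - qQ a (j : ℕ)))

/-- The affine map `F̃_i(s) = p_{i−1} + s·Δp_i` of `[0,1]` onto `[p_{i−1}, p_i]`. -/
def Ftilde {k ℓ : ℕ} (a : Fin k → Fin ℓ → ℝ) (i : Fin k) (x : I) : I :=
  toI (pP a (i : ℕ) + (x : ℝ) * (pP a ((i : ℕ) + 1) - pP a (i : ℕ)))

/-- `T'` is the `A`-patching of `T`: for every `ψ ∈ L¹` and λ-a.e. `x`,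
`T'ψ(x) = Σ_i Σ_j (a_{ij}/Δp_i) · (T(ψ ∘ G̃_j))(F_i(x))`.  (Here `φ j` is any
`L¹`-representative of `ψ ∘ G̃_j`.) -/
def IsAPatching {k ℓ : ℕ} (a : Fin k → Fin ℓ → ℝ)
    (T' T : Lp ℝ 1 (volume : Measure I) →L[ℝ] Lp ℝ 1 (volume : Measure I)) : Prop :=
  ∀ (ψ : Lp ℝ 1 (volume : Measure I)) (φ : Fin ℓ → Lp ℝ 1 (volume : Measure I)),
    (∀ j, ⇑(φ j) =ᵐ[volume] fun x => ψ (Gtilde a j x)) →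
    ⇑(T' ψ) =ᵐ[volume] fun x =>
      ∑ i, ∑ j, (a i j / (pP a ((i : ℕ) + 1) - pP a (i : ℕ))) * (T (φ j)) (FdistI a i x)

/-- `(I₀, J₀)` is an invariant pair of the transformation matrix `a`. -/
def IsInvariantPair {k ℓ : ℕ} (a : Fin k → Fin ℓ → ℝ)
    (I₀ : Finset (Fin k)) (J₀ : Finset (Fin ℓ)) : Prop :=
  I₀.Nonempty ∧ J₀.Nonempty ∧
  (∀ i j, ((i ∈ I₀ ∧ j ∉ J₀) ∨ (i ∉ I₀ ∧ j ∈ J₀)) → a i j = 0) ∧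
  (∃ i ∈ I₀, ∃ j ∈ J₀, a i j ≠ 0)

/-- `a` is disjointly decomposable by the `N` invariant pairs `(Is n, Js n)`. -/
def DisjointlyDecomposable {k ℓ N : ℕ} (a : Fin k → Fin ℓ → ℝ)
    (Is : Fin N → Finset (Fin k)) (Js : Fin N → Finset (Fin ℓ)) : Prop :=
  (∀ n, IsInvariantPair a (Is n) (Js n)) ∧
  (∀ m n, m ≠ n → Disjoint (Is m) (Is n) ∧ Disjoint (Js m) (Js n)) ∧
  (∀ i, ∃ n, i ∈ Is n) ∧ (∀ j, ∃ n, j ∈ Js n)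

-- ===== chunk 1 =====
namespace Stmt14

variable {k ℓ : ℕ} {a : Fin k → Fin ℓ → ℝ}

lemma hano (ha : (∀ i j, 0 ≤ a i j) ∧ (∑ i, ∑ j, a i j = 1) ∧
    (∀ j, ∃ i, a i j ≠ 0) ∧ (∀ i, ∃ j, a i j ≠ 0)) : True := trivial

lemma pP_zero : pP a 0 = 0 := by simp [pP]

lemma pP_mono (ha : ∀ i j, 0 ≤ a i j) : Monotone (pP a) := by
  intro m n hmn
  refine Finset.sum_le_sum fun i _ => ?_
  by_cases h : (i : ℕ) < m
  · rw [if_pos h, if_pos (h.trans_le hmn)]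
  · rw [if_neg h]
    split
    · exact Finset.sum_nonneg fun j _ => ha i j
    · exact le_rfl

lemma pP_of_ge (hs : ∑ i, ∑ j, a i j = 1) {m : ℕ} (hm : k ≤ m) : pP a m = 1 := by
  rw [← hs]
  exact Finset.sum_congr rfl fun i _ => if_pos (lt_of_lt_of_le i.isLt hm)

lemma pP_nonneg (ha : ∀ i j, 0 ≤ a i j) (m : ℕ) : 0 ≤ pP a m := by
  have := pP_mono ha (Nat.zero_le m); rwa [pP_zero] at this

lemma pP_le_one (ha : ∀ i j, 0 ≤ a i j) (hs : ∑ i, ∑ j, a i j = 1) (m : ℕ) :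
    pP a m ≤ 1 := by
  rcases le_or_gt k m with h | h
  · rw [pP_of_ge hs h]
  · rw [← pP_of_ge hs (le_refl k)]
    exact pP_mono ha h.le

lemma pP_succ (i : Fin k) : pP a ((i : ℕ) + 1) = pP a (i : ℕ) + ∑ j, a i j := by
  unfold pP
  have : ∀ i' : Fin k, (if (i' : ℕ) < (i : ℕ) + 1 then ∑ j, a i' j else 0)
      = (if (i' : ℕ) < (i : ℕ) then ∑ j, a i' j else 0)
        + (if i' = i then ∑ j, a i' j else 0) := by
    intro i'
    rcases lt_trichotomy (i' : ℕ) (i : ℕ) with h | h | h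
    · rw [if_pos h, if_pos (h.trans (Nat.lt_succ_self _)),
        if_neg (fun he => absurd (congrArg Fin.val he) h.ne), add_zero]
    · have he : i' = i := Fin.ext h
      rw [if_pos (by omega), if_neg (by omega), if_pos he, zero_add]
    · rw [if_neg (by omega), if_neg (by omega),
        if_neg (fun he => absurd (congrArg Fin.val he) (by omega)), add_zero]
  rw [Finset.sum_congr rfl fun i' _ => this i', Finset.sum_add_distrib,
    Finset.sum_ite_eq' Finset.univ i (fun i' => ∑ j, a i' j), if_pos (Finset.mem_univ i)]

lemma dP_pos (ha : ∀ i j, 0 ≤ a i j) (hc : ∀ i, ∃ j, a i j ≠ 0) (i : Fin k) :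
    0 < pP a ((i : ℕ) + 1) - pP a (i : ℕ) := by
  rw [pP_succ, add_sub_cancel_left]
  obtain ⟨j, hj⟩ := hc i
  exact Finset.sum_pos' (fun j _ => ha i j)
    ⟨j, Finset.mem_univ j, lt_of_le_of_ne (ha i j) (Ne.symm hj)⟩

lemma pP_succ_le (ha : ∀ i j, 0 ≤ a i j) {i i' : Fin k} (h : (i : ℕ) < (i' : ℕ)) :
    pP a ((i : ℕ) + 1) ≤ pP a (i' : ℕ) :=
  pP_mono ha h

end Stmt14

-- ===== chunk 2 =====
namespace Stmt14

lemma vol_eq_image (A : Set I) : volume A = volume (Subtype.val '' A) :=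
  (MeasurableEmbedding.subtype_coe measurableSet_Icc).comap_apply _ _

lemma vol_pair_zero (x y : I) : volume ({z : I | z = x ∨ z = y}) = 0 := by
  have : {z : I | z = x ∨ z = y} = {x} ∪ {y} := by ext z; simp [Set.mem_union]; tauto
  rw [this]
  refine le_antisymm ((measure_union_le _ _).trans ?_) zero_le
  rw [vol_eq_image {x}, vol_eq_image {y}]
  simp

lemma vol_preimage_affine (c : ℝ) {d : ℝ} (hd : d ≠ 0) (A : Set ℝ) :
    volume ((fun y => c + d * y) ⁻¹' A) = ENNReal.ofReal |d⁻¹| * volume A := by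
  have : (fun y => c + d * y) = (fun z => c + z) ∘ (fun y => d * y) := rfl
  rw [this, preimage_comp, Real.volume_preimage_mul_left hd, measure_preimage_add]

lemma vol_preimage_coe_le (B : Set ℝ) : volume (Subtype.val ⁻¹' B : Set I) ≤ volume B := by
  rw [vol_eq_image]
  exact measure_mono (image_preimage_subset _ _)

/-- Key a.e.-composition lemma: composing an a.e. equality with a map that is affine
(with positive slope) on a set `E`. -/
lemma ae_comp_affine {c d : ℝ} (hd : d ≠ 0) {g : I → I} {E : Set I}
    (hg : ∀ x ∈ E, (g x : ℝ) = c + d * (x : ℝ))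
    {f₁ f₂ : I → ℝ} (hf : f₁ =ᵐ[volume] f₂) :
    ∀ᵐ x, x ∈ E → f₁ (g x) = f₂ (g x) := by
  have hN : volume {y : I | ¬ f₁ y = f₂ y} = 0 := hf
  rw [Filter.eventually_iff, mem_ae_iff]
  have hsub : {x : I | x ∈ E → f₁ (g x) = f₂ (g x)}ᶜ ⊆
      Subtype.val ⁻¹' ((fun y => c + d * y) ⁻¹' (Subtype.val '' {y : I | ¬ f₁ y = f₂ y})) := by
    intro x hx
    simp only [mem_compl_iff, mem_setOf_eq, not_forall] at hx
    obtain ⟨hxE, hne⟩ := hx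
    have : g x ∈ {y : I | ¬ f₁ y = f₂ y} := hne
    have hv : (g x : ℝ) ∈ Subtype.val '' {y : I | ¬ f₁ y = f₂ y} := ⟨g x, this, rfl⟩
    rw [hg x hxE] at hv
    exact hv
  refine measure_mono_null hsub ?_
  refine le_antisymm ((vol_preimage_coe_le _).trans ?_) zero_le
  rw [vol_preimage_affine _ hd, ← vol_eq_image, hN, mul_zero]

lemma exists_mem_of_ae {E : Set I} (hE : volume E ≠ 0) {p : I → Prop}
    (h : ∀ᵐ x, p x) : ∃ x ∈ E, p x := by
  by_contra hc
  push_neg at hc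
  have hnull : volume {x : I | ¬ p x} = 0 := h
  exact hE (measure_mono_null (fun x hx => hc x hx) hnull)

end Stmt14


-- ===== chunk 3 =====
namespace Stmt14

variable {k ℓ : ℕ} {a : Fin k → Fin ℓ → ℝ}

lemma toI_coe {x : ℝ} (h0 : 0 ≤ x) (h1 : x ≤ 1) : ((toI x : I) : ℝ) = x := by
  simp only [toI, max_eq_right h0, min_eq_right h1]

lemma toI_zero : toI 0 = (0 : I) := by
  ext; rw [toI_coe le_rfl zero_le_one]; rfl

lemma toI_one : toI 1 = (1 : I) := by
  ext; rw [toI_coe zero_le_one le_rfl]; rfl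

lemma isTransf_swap (ha : IsTransfMatrix a) : IsTransfMatrix (Function.swap a) := by
  obtain ⟨hnn, hsum, hrow, hcol⟩ := ha
  exact ⟨fun j i => hnn i j, by rw [Finset.sum_comm]; exact hsum, hcol, hrow⟩

lemma qQ_eq_pP : qQ a = pP (Function.swap a) := rfl

lemma k_pos (ha : IsTransfMatrix a) : 0 < k := by
  by_contra h
  push_neg at h
  interval_cases k
  · obtain ⟨-, hsum, -, -⟩ := ha
    simp at hsum

lemma l_pos (ha : IsTransfMatrix a) : 0 < ℓ := k_pos (isTransf_swap ha)

section TM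
variable (ha : IsTransfMatrix a)
include ha

lemma pPt_nonneg (m : ℕ) : 0 ≤ pP a m := pP_nonneg ha.1 m
lemma pPt_le_one (m : ℕ) : pP a m ≤ 1 := pP_le_one ha.1 ha.2.1 m
lemma pPt_mono : Monotone (pP a) := pP_mono ha.1
lemma dPt_pos (i : Fin k) : 0 < pP a ((i : ℕ) + 1) - pP a (i : ℕ) :=
  dP_pos ha.1 ha.2.2.2 i

lemma qQt_nonneg (m : ℕ) : 0 ≤ qQ a m := qQ_eq_pP ▸ pP_nonneg (isTransf_swap ha).1 m
lemma qQt_le_one (m : ℕ) : qQ a m ≤ 1 :=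
  qQ_eq_pP ▸ pP_le_one (isTransf_swap ha).1 (isTransf_swap ha).2.1 m
lemma qQt_mono : Monotone (qQ a) := qQ_eq_pP ▸ pP_mono (isTransf_swap ha).1
lemma dQt_pos (j : Fin ℓ) : 0 < qQ a ((j : ℕ) + 1) - qQ a (j : ℕ) :=
  qQ_eq_pP ▸ dP_pos (isTransf_swap ha).1 (isTransf_swap ha).2.2.2 j

lemma Gtilde_coe (j : Fin ℓ) (x : I) :
    ((Gtilde a j x : I) : ℝ) = qQ a (j : ℕ) + (x : ℝ) * (qQ a ((j : ℕ) + 1) - qQ a (j : ℕ)) := by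
  have h1 := qQt_nonneg ha (j : ℕ)
  have h2 := qQt_le_one ha ((j : ℕ) + 1)
  have h3 := dQt_pos ha j
  have hx0 := x.2.1
  have hx1 := x.2.2
  exact toI_coe (by nlinarith) (by nlinarith)

lemma Ftilde_coe (i : Fin k) (x : I) :
    ((Ftilde a i x : I) : ℝ) = pP a (i : ℕ) + (x : ℝ) * (pP a ((i : ℕ) + 1) - pP a (i : ℕ)) := by
  have h1 := pPt_nonneg ha (i : ℕ)
  have h2 := pPt_le_one ha ((i : ℕ) + 1)
  have h3 := dPt_pos ha i
  have hx0 := x.2.1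
  have hx1 := x.2.2
  exact toI_coe (by nlinarith) (by nlinarith)

lemma Gtilde_inj (j : Fin ℓ) : Function.Injective (Gtilde a j) := by
  intro x y hxy
  have := congrArg (Subtype.val) hxy
  rw [Gtilde_coe ha, Gtilde_coe ha] at this
  have h3 := dQt_pos ha j
  ext
  nlinarith [this]

lemma Gtilde_continuous (j : Fin ℓ) : Continuous (Gtilde a j) := by
  unfold Gtilde toI
  fun_prop

lemma Gtilde_measurableEmbedding (j : Fin ℓ) : MeasurableEmbedding (Gtilde a j) :=
  ((Gtilde_continuous ha j).isClosedEmbedding (Gtilde_inj ha j)).measurableEmbedding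

lemma Ftilde_inj (i : Fin k) : Function.Injective (Ftilde a i) := by
  intro x y hxy
  have := congrArg (Subtype.val) hxy
  rw [Ftilde_coe ha, Ftilde_coe ha] at this
  have h3 := dPt_pos ha i
  ext
  nlinarith [this]

lemma Ftilde_continuous (i : Fin k) : Continuous (Ftilde a i) := by
  unfold Ftilde toI
  fun_prop

lemma Ftilde_measurableEmbedding (i : Fin k) : MeasurableEmbedding (Ftilde a i) :=
  ((Ftilde_continuous ha i).isClosedEmbedding (Ftilde_inj ha i)).measurableEmbedding

end TM

/-- The open block `(p_{i-1}, p_i)` as a subset of `I`. -/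
def Blk (a : Fin k → Fin ℓ → ℝ) (i : Fin k) : Set I :=
  Subtype.val ⁻¹' Ioo (pP a (i : ℕ)) (pP a ((i : ℕ) + 1))

lemma mem_Blk {i : Fin k} {x : I} :
    x ∈ Blk a i ↔ pP a (i : ℕ) < (x : ℝ) ∧ (x : ℝ) < pP a ((i : ℕ) + 1) := Iff.rfl

/-- The inverse of `Ftilde i` on block `i`. -/
def blkMap (a : Fin k → Fin ℓ → ℝ) (i : Fin k) (x : I) : I :=
  toI (((x : ℝ) - pP a (i : ℕ)) / (pP a ((i : ℕ) + 1) - pP a (i : ℕ)))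

section TM2
variable (ha : IsTransfMatrix a)
include ha

lemma blkMap_coe {i : Fin k} {x : I} (hx : x ∈ Blk a i) :
    ((blkMap a i x : I) : ℝ) = ((x : ℝ) - pP a (i : ℕ)) / (pP a ((i : ℕ) + 1) - pP a (i : ℕ)) := by
  obtain ⟨h1, h2⟩ := mem_Blk.mp hx
  have h3 := dPt_pos ha i
  exact toI_coe (div_nonneg (by linarith) h3.le) (by rw [div_le_one h3]; linarith)

lemma FdistI_of_le {i : Fin k} {x : I} (h : (x : ℝ) ≤ pP a (i : ℕ)) :
    FdistI a i x = 0 := by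
  unfold FdistI
  rw [if_neg (not_lt.2 h), toI_zero]

lemma FdistI_of_ge {i : Fin k} {x : I} (h : pP a ((i : ℕ) + 1) ≤ (x : ℝ)) :
    FdistI a i x = 1 := by
  have h3 := dPt_pos ha i
  have h1 : pP a (i : ℕ) < (x : ℝ) := by linarith
  unfold FdistI
  rw [if_pos h1, min_eq_left (by rw [le_div_iff₀ h3]; linarith), toI_one]

lemma FdistI_eq_blkMap {i : Fin k} {x : I} (hx : x ∈ Blk a i) :
    FdistI a i x = blkMap a i x := by
  obtain ⟨h1, h2⟩ := mem_Blk.mp hx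
  have h3 := dPt_pos ha i
  ext
  rw [blkMap_coe ha hx]
  unfold FdistI
  rw [if_pos h1, min_eq_right (by rw [div_le_one h3]; linarith)]
  exact toI_coe (div_nonneg (by linarith) h3.le) (by rw [div_le_one h3]; linarith)

lemma blkMap_affine (i : Fin k) :
    ∀ x ∈ Blk a i, ((blkMap a i x : I) : ℝ) =
      (-(pP a (i : ℕ)) / (pP a ((i : ℕ) + 1) - pP a (i : ℕ)))
        + (pP a ((i : ℕ) + 1) - pP a (i : ℕ))⁻¹ * (x : ℝ) := by
  intro x hx
  rw [blkMap_coe ha hx]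
  have h3 := (dPt_pos ha i).ne'
  field_simp
  ring

lemma Ioo_subset_Icc01 (i : Fin k) :
    Ioo (pP a (i : ℕ)) (pP a ((i : ℕ) + 1)) ⊆ Icc (0 : ℝ) 1 := fun y hy =>
  ⟨le_of_lt (lt_of_le_of_lt (pPt_nonneg ha _) hy.1),
    le_of_lt (lt_of_lt_of_le hy.2 (pPt_le_one ha _))⟩

lemma vol_Blk (i : Fin k) :
    volume (Blk a i) = ENNReal.ofReal (pP a ((i : ℕ) + 1) - pP a (i : ℕ)) := by
  rw [vol_eq_image]
  unfold Blk
  rw [Subtype.image_preimage_coe]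
  rw [inter_eq_right.mpr (Ioo_subset_Icc01 ha i)]
  exact Real.volume_Ioo

lemma vol_Blk_ne_zero (i : Fin k) : volume (Blk a i) ≠ 0 := by
  rw [vol_Blk ha i]
  simp only [ne_eq, ENNReal.ofReal_eq_zero, not_le]
  exact dPt_pos ha i

end TM2

end Stmt14


-- ===== chunk 4 =====
namespace Stmt14

variable {k ℓ : ℕ} {a : Fin k → Fin ℓ → ℝ}

section TM3
variable (ha : IsTransfMatrix a)
include ha

/-- measure of `{x ∈ Blk i | blkMap i x ∈ A}` is `Δp_i · λ(A)`, for ANY `A`. -/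
lemma vol_blk_inter (i : Fin k) (A : Set I) :
    volume {x : I | x ∈ Blk a i ∧ blkMap a i x ∈ A}
      = ENNReal.ofReal (pP a ((i : ℕ) + 1) - pP a (i : ℕ)) * volume A := by
  set c := pP a (i : ℕ) with hc
  set e := pP a ((i : ℕ) + 1) with he
  have hd : 0 < e - c := dPt_pos ha i
  set vA := Subtype.val '' A with hvA
  set W := (fun y : ℝ => (-c / (e - c)) + (e - c)⁻¹ * y) ⁻¹' vA with hW
  have hset : {x : I | x ∈ Blk a i ∧ blkMap a i x ∈ A} = Subtype.val ⁻¹' (Ioo c e ∩ W) := by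
    ext x
    simp only [mem_setOf_eq, mem_preimage, mem_inter_iff, hW, mem_preimage]
    constructor
    · rintro ⟨hxB, hxA⟩
      refine ⟨hxB, ?_⟩
      have := blkMap_affine ha i x hxB
      rw [← this]
      exact ⟨blkMap a i x, hxA, rfl⟩
    · rintro ⟨hxB, hxW⟩
      refine ⟨hxB, ?_⟩
      have haff := blkMap_affine ha i x hxB
      rw [← haff] at hxW
      obtain ⟨y, hyA, hyv⟩ := hxW
      have : y = blkMap a i x := Subtype.ext hyv
      rwa [← this]
  -- W is contained in [c, e]
  have hWsub : W ⊆ Icc c e := by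
    intro y hy
    obtain ⟨z, hz, hzv⟩ := hy
    have hz0 := z.2.1
    have hz1 := z.2.2
    have : (z : ℝ) = (y - c) / (e - c) := by
      rw [hzv]
      show -c / (e - c) + (e - c)⁻¹ * y = (y - c) / (e - c)
      field_simp
      ring
    rw [this] at hz0 hz1
    rw [div_le_one hd] at hz1
    rw [le_div_iff₀ hd] at hz0
    constructor <;> nlinarith
  have hWvol : volume W = ENNReal.ofReal (e - c) * volume A := by
    rw [hW, vol_preimage_affine _ (by positivity : ((e - c)⁻¹ : ℝ) ≠ 0), inv_inv,
      abs_of_pos hd, ← vol_eq_image]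
  have hIW : volume (Ioo c e ∩ W) = volume W := by
    refine le_antisymm (measure_mono inter_subset_right) ?_
    have : W ⊆ (Ioo c e ∩ W) ∪ {c, e} := by
      intro y hy
      rcases eq_or_ne y c with h | h
      · exact Or.inr (by simp [h])
      rcases eq_or_ne y e with h' | h'
      · exact Or.inr (by simp [h'])
      · obtain ⟨hy1, hy2⟩ := hWsub hy
        exact Or.inl ⟨⟨lt_of_le_of_ne hy1 (Ne.symm h), lt_of_le_of_ne hy2 h'⟩, hy⟩
    calc volume W ≤ volume ((Ioo c e ∩ W) ∪ {c, e}) := measure_mono this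
      _ ≤ volume (Ioo c e ∩ W) + volume ({c, e} : Set ℝ) := measure_union_le _ _
      _ = volume (Ioo c e ∩ W) := by
          rw [show volume ({c, e} : Set ℝ) = 0 from
            ((finite_singleton e).insert c).measure_zero volume, add_zero]
  rw [hset, vol_eq_image, Subtype.image_preimage_coe,
    inter_eq_right.mpr (fun y hy => Ioo_subset_Icc01 ha i hy.1), hIW, hWvol]

lemma ae_mem_blk : ∀ᵐ x : I, ∃ i, x ∈ Blk a i := by
  rw [Filter.eventually_iff, mem_ae_iff]
  have hk := k_pos ha
  set U : Set ℝ := ⋃ m ∈ Finset.range (k + 1), {pP a m} with hU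
  have hsub : {x : I | ∃ i, x ∈ Blk a i}ᶜ ⊆ Subtype.val ⁻¹' U := by
    intro x hx
    simp only [mem_compl_iff, mem_setOf_eq, not_exists] at hx
    by_contra hxU
    simp only [mem_preimage, hU, mem_iUnion, Finset.mem_range, mem_singleton_iff,
      not_exists] at hxU
    -- find the block containing x
    set M := (Finset.range (k + 1)).filter (fun m => pP a m < (x : ℝ)) with hM
    have h0M : 0 ∈ M := by
      refine Finset.mem_filter.mpr ⟨Finset.mem_range.mpr (by omega), ?_⟩
      rw [pP_zero]
      rcases lt_or_eq_of_le x.2.1 with h | h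
      · exact h
      · exact absurd h.symm (by simpa [pP_zero] using hxU 0 (by omega))
    have hMne : M.Nonempty := ⟨0, h0M⟩
    set m := M.max' hMne with hm
    have hmM : m ∈ M := Finset.max'_mem _ _
    have hmlt : pP a m < (x : ℝ) := (Finset.mem_filter.mp hmM).2
    have hmk : m < k := by
      have hmk1 : m < k + 1 := Finset.mem_range.mp (Finset.mem_filter.mp hmM).1
      rcases Nat.lt_or_ge m k with h | h
      · exact h
      · exfalso
        have : m = k := by omega
        rw [this] at hmlt
        rw [pP_of_ge ha.2.1 le_rfl] at hmlt
        exact absurd hmlt (by linarith [x.2.2])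
    refine hx ⟨m, hmk⟩ (mem_Blk.mpr ⟨hmlt, ?_⟩)
    have hnotin : pP a (m + 1) ≥ (x : ℝ) := by
      by_contra h
      push_neg at h
      have : m + 1 ∈ M := Finset.mem_filter.mpr ⟨Finset.mem_range.mpr (by omega), h⟩
      have := Finset.le_max' M _ this
      omega
    rcases lt_or_eq_of_le hnotin with h | h
    · exact h
    · exact absurd h (hxU (m + 1) (by omega))
  refine measure_mono_null hsub ?_
  refine le_antisymm ((vol_preimage_coe_le _).trans ?_) zero_le
  have : U.Finite := Set.Finite.biUnion (Finset.finite_toSet _) (fun m _ => finite_singleton _)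
  rw [this.measure_zero volume]

lemma gtilde_mem_image_cases {j j'' : Fin ℓ} {B : Set I} {x : I}
    (hx : Gtilde a j x ∈ Gtilde a j'' '' B) :
    (j = j'' ∧ x ∈ B) ∨ (x : ℝ) = 0 ∨ (x : ℝ) = 1 := by
  obtain ⟨y, hyB, hyx⟩ := hx
  have hv := congrArg Subtype.val hyx
  rw [Gtilde_coe ha, Gtilde_coe ha] at hv
  have hdj := dQt_pos ha j
  have hdj'' := dQt_pos ha j''
  have hy0 := y.2.1
  have hy1 := y.2.2
  have hx0 := x.2.1
  have hx1 := x.2.2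
  rcases lt_trichotomy (j'' : ℕ) (j : ℕ) with h | h | h
  · -- x = 0
    have h1 : qQ a ((j'' : ℕ) + 1) ≤ qQ a (j : ℕ) := qQ_eq_pP ▸ pP_succ_le (isTransf_swap ha).1 h
    right; left
    nlinarith
  · have he : j = j'' := (Fin.ext h.symm)
    subst he
    left
    refine ⟨rfl, ?_⟩
    have : y = x := by ext; nlinarith
    rwa [← this]
  · have h1 : qQ a ((j : ℕ) + 1) ≤ qQ a (j'' : ℕ) := qQ_eq_pP ▸ pP_succ_le (isTransf_swap ha).1 h
    right; right
    nlinarith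

lemma ftilde_mem_image_cases {i i'' : Fin k} {B : Set I} {x : I}
    (hblk : x ∈ Blk a i) (hx : x ∈ Ftilde a i'' '' B) :
    i = i'' ∧ blkMap a i x ∈ B := by
  obtain ⟨y, hyB, hyx⟩ := hx
  have hv := congrArg Subtype.val hyx
  rw [Ftilde_coe ha] at hv
  obtain ⟨hb1, hb2⟩ := mem_Blk.mp hblk
  have hdi := dPt_pos ha i
  have hdi'' := dPt_pos ha i''
  have hy0 := y.2.1
  have hy1 := y.2.2
  rcases lt_trichotomy (i'' : ℕ) (i : ℕ) with h | h | h
  · exfalso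
    have h1 : pP a ((i'' : ℕ) + 1) ≤ pP a (i : ℕ) := pP_succ_le ha.1 h
    nlinarith
  · have he : i = i'' := Fin.ext h.symm
    subst he
    refine ⟨rfl, ?_⟩
    have : blkMap a i x = y := by
      ext
      rw [blkMap_coe ha hblk, ← hv]
      field_simp
      ring
    rwa [this]
  · exfalso
    have h1 : pP a ((i : ℕ) + 1) ≤ pP a (i'' : ℕ) := pP_succ_le ha.1 h
    nlinarith

lemma mem_ftilde_image {i : Fin k} {B : Set I} {x : I}
    (hblk : x ∈ Blk a i) (hB : blkMap a i x ∈ B) : x ∈ Ftilde a i '' B := by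
  refine ⟨blkMap a i x, hB, ?_⟩
  ext
  rw [Ftilde_coe ha, blkMap_coe ha hblk]
  have hdi := (dPt_pos ha i).ne'
  field_simp
  ring

end TM3

end Stmt14


-- ===== chunk 5 =====
namespace Stmt14

variable {k ℓ : ℕ} {a : Fin k → Fin ℓ → ℝ}

lemma ind_coeFn {S : Set I} (hS : MeasurableSet S) :
    ⇑(ind S) =ᵐ[volume] S.indicator (fun _ => (1 : ℝ)) := by
  rw [ind, dif_pos hS]
  exact indicatorConstLp_coeFn

lemma ind_empty : ind (∅ : Set I) = 0 := by
  refine Lp.ext (((ind_coeFn MeasurableSet.empty).trans ?_).trans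
    (Lp.coeFn_zero ℝ 1 (volume : Measure I)).symm)
  simp only [Set.indicator_empty]
  exact Filter.EventuallyEq.rfl

lemma ind_of_null {R : Set I} (hR : MeasurableSet R) (h : volume R = 0) :
    ind R = ind (∅ : Set I) := by
  refine Lp.ext ((ind_coeFn hR).trans (((ind_coeFn MeasurableSet.empty)).symm.mp ?_))
  have : ∀ᵐ x : I, x ∉ R := by
    rw [ae_iff]
    simpa using h
  filter_upwards [this] with x hx
  simp [Set.indicator_of_notMem hx]

lemma ind_of_conull {R : Set I} (hR : MeasurableSet R) (h : volume Rᶜ = 0) :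
    ind R = ind (univ : Set I) := by
  refine Lp.ext ((ind_coeFn hR).trans (((ind_coeFn MeasurableSet.univ)).symm.mp ?_))
  have : ∀ᵐ x : I, x ∈ R := by
    rw [ae_iff]
    exact h
  filter_upwards [this] with x hx
  simp [Set.indicator_of_mem hx]

lemma ind_nonneg {S : Set I} (hS : MeasurableSet S) : 0 ≤ᵐ[volume] ⇑(ind S) := by
  filter_upwards [ind_coeFn hS] with x hx
  rw [hx]
  exact Set.indicator_nonneg (fun _ _ => zero_le_one) x

lemma ind_le_one {S : Set I} (hS : MeasurableSet S) :
    ⇑(ind S) ≤ᵐ[volume] fun _ => (1 : ℝ) := by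
  filter_upwards [ind_coeFn hS] with x hx
  rw [hx]
  by_cases h : x ∈ S
  · simp [Set.indicator_of_mem h]
  · simp [Set.indicator_of_notMem h]

variable {T : Lp ℝ 1 (volume : Measure I) →L[ℝ] Lp ℝ 1 (volume : Measure I)}

lemma markov_le_one (hT : IsMarkovOperator T) {ψ : Lp ℝ 1 (volume : Measure I)}
    (h1 : ⇑ψ ≤ᵐ[volume] fun _ => (1 : ℝ)) :
    ⇑(T ψ) ≤ᵐ[volume] fun _ => (1 : ℝ) := by
  have hpre : 0 ≤ᵐ[volume] ⇑(ind univ - ψ) := by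
    filter_upwards [Lp.coeFn_sub (ind (univ : Set I)) ψ, ind_coeFn (MeasurableSet.univ (α := I)),
      h1] with x hsx hux h1x
    show (0 : I → ℝ) x ≤ _
    rw [hsx]
    simp only [Pi.sub_apply, Pi.zero_apply, hux, Set.indicator_univ]
    linarith [h1x]
  have hpos := hT.positive _ hpre
  rw [show T (ind univ - ψ) = ind univ - T ψ by rw [map_sub, hT.map_one]] at hpos
  filter_upwards [hpos, Lp.coeFn_sub (ind (univ : Set I)) (T ψ),
    ind_coeFn (MeasurableSet.univ (α := I))] with x hx hsx hux
  rw [hsx] at hx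
  simp only [Pi.sub_apply, Pi.zero_apply, hux, Set.indicator_univ] at hx
  linarith [hx]

variable {T' : Lp ℝ 1 (volume : Measure I) →L[ℝ] Lp ℝ 1 (volume : Measure I)}

/-- The general "block analysis" lemma, one application of the patching identity. -/
lemma app_blk (ha : IsTransfMatrix a) (hpatch : IsAPatching a T' T)
    (ψ : Lp ℝ 1 (volume : Measure I)) (φ : Fin ℓ → Lp ℝ 1 (volume : Measure I))
    (hφ : ∀ j, ⇑(φ j) =ᵐ[volume] fun x => ψ (Gtilde a j x))
    (W : Fin ℓ → Set I)
    (hW : ∀ j, ⇑(T (φ j)) =ᵐ[volume] (W j).indicator (fun _ => (1 : ℝ)))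
    (i : Fin k) :
    ∀ᵐ x, x ∈ Blk a i → ⇑(T' ψ) x =
      (∑ j, (a i j / (pP a ((i : ℕ) + 1) - pP a (i : ℕ)))
          * (W j).indicator (fun _ => (1 : ℝ)) (blkMap a i x))
      + ∑ i' : Fin k, (if (i : ℕ) < (i' : ℕ) then
            ∑ j, (a i' j / (pP a ((i' : ℕ) + 1) - pP a (i' : ℕ))) * (⇑(T (φ j)) 0)
          else if (i' : ℕ) < (i : ℕ) then
            ∑ j, (a i' j / (pP a ((i' : ℕ) + 1) - pP a (i' : ℕ))) * (⇑(T (φ j)) 1)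
          else 0) := by
  have hp := hpatch ψ φ hφ
  have hd := dPt_pos ha i
  have hcomp : ∀ j : Fin ℓ, ∀ᵐ x, x ∈ Blk a i →
      ⇑(T (φ j)) (blkMap a i x) = (W j).indicator (fun _ => (1 : ℝ)) (blkMap a i x) :=
    fun j => ae_comp_affine (by positivity : ((pP a ((i : ℕ) + 1) - pP a (i : ℕ))⁻¹ : ℝ) ≠ 0)
      (blkMap_affine ha i) (hW j)
  rw [← ae_all_iff] at hcomp
  filter_upwards [hp, hcomp] with x hx hcx hxB
  rw [hx]
  show (∑ i', ∑ j, (a i' j / (pP a ((i' : ℕ) + 1) - pP a (i' : ℕ)))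
      * ⇑(T (φ j)) (FdistI a i' x)) = _
  have hsplit : ∀ i' : Fin k, (∑ j, (a i' j / (pP a ((i' : ℕ) + 1) - pP a (i' : ℕ)))
        * ⇑(T (φ j)) (FdistI a i' x))
      = (if i' = i then ∑ j, (a i j / (pP a ((i : ℕ) + 1) - pP a (i : ℕ)))
            * ⇑(T (φ j)) (blkMap a i x) else 0)
        + (if (i : ℕ) < (i' : ℕ) then
            ∑ j, (a i' j / (pP a ((i' : ℕ) + 1) - pP a (i' : ℕ))) * (⇑(T (φ j)) 0)
          else if (i' : ℕ) < (i : ℕ) then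
            ∑ j, (a i' j / (pP a ((i' : ℕ) + 1) - pP a (i' : ℕ))) * (⇑(T (φ j)) 1)
          else 0) := by
    intro i'
    obtain ⟨hb1, hb2⟩ := mem_Blk.mp hxB
    rcases lt_trichotomy ((i' : ℕ)) ((i : ℕ)) with h | h | h
    · have hF : FdistI a i' x = 1 :=
        FdistI_of_ge ha (le_trans (pP_succ_le ha.1 h) (le_of_lt hb1))
      rw [hF, if_neg (fun he => absurd (congrArg Fin.val he) (by omega)),
        if_neg (by omega), if_pos h, zero_add]
    · have he : i' = i := Fin.ext h
      subst he
      rw [FdistI_eq_blkMap ha hxB, if_pos rfl, if_neg (by omega), if_neg (by omega), add_zero]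
    · have hF : FdistI a i' x = 0 := by
        refine FdistI_of_le ha (le_trans (le_of_lt hb2) (pPt_mono ha ?_))
        omega
      rw [hF, if_neg (fun he => absurd (congrArg Fin.val he) (by omega)), if_pos h, zero_add]
  rw [Finset.sum_congr rfl (fun i' _ => hsplit i'), Finset.sum_add_distrib,
    Finset.sum_ite_eq' Finset.univ i, if_pos (Finset.mem_univ i)]
  congr 1
  exact Finset.sum_congr rfl (fun j _ => by rw [hcx j hxB])

end Stmt14


-- ===== chunk 6 =====
namespace Stmt14

variable {k ℓ : ℕ} {a : Fin k → Fin ℓ → ℝ}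

lemma ae_ne_endpoints : ∀ᵐ x : I, (x : ℝ) ≠ 0 ∧ (x : ℝ) ≠ 1 := by
  rw [ae_iff]
  refine measure_mono_null ?_ (vol_pair_zero 0 1)
  intro x hx
  simp only [mem_setOf_eq, not_and_or, not_not] at hx
  rcases hx with h | h
  · exact Or.inl (Subtype.ext h)
  · exact Or.inr (Subtype.ext h)

lemma phi_premise (ha : IsTransfMatrix a) {ψ φj : Lp ℝ 1 (volume : Measure I)}
    {Sψ V : Set I}
    (hψ : ⇑ψ =ᵐ[volume] Sψ.indicator (fun _ => (1 : ℝ)))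
    (hφj : ⇑φj =ᵐ[volume] V.indicator (fun _ => (1 : ℝ)))
    (j : Fin ℓ)
    (hiff : ∀ x : I, (x : ℝ) ≠ 0 → (x : ℝ) ≠ 1 → (Gtilde a j x ∈ Sψ ↔ x ∈ V)) :
    ⇑φj =ᵐ[volume] fun x => ψ (Gtilde a j x) := by
  have h1 : ∀ᵐ x : I, x ∈ (univ : Set I) →
      ψ (Gtilde a j x) = Sψ.indicator (fun _ => (1 : ℝ)) (Gtilde a j x) :=
    ae_comp_affine (dQt_pos ha j).ne' (fun x _ => by rw [Gtilde_coe ha j x]; ring) hψ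
  filter_upwards [hφj, h1, ae_ne_endpoints] with x hφx h1x hex
  rw [hφx, h1x (mem_univ x)]
  have hif := hiff x hex.1 hex.2
  by_cases hm : x ∈ V
  · rw [Set.indicator_of_mem hm, Set.indicator_of_mem (hif.mpr hm)]
  · rw [Set.indicator_of_notMem hm, Set.indicator_of_notMem (fun hc => hm (hif.mp hc))]

lemma csum_all (ha : IsTransfMatrix a) (i' : Fin k) :
    ∑ j, a i' j / (pP a ((i' : ℕ) + 1) - pP a (i' : ℕ)) = 1 := by
  rw [← Finset.sum_div]
  rw [show (∑ j, a i' j) = pP a ((i' : ℕ) + 1) - pP a (i' : ℕ) by rw [pP_succ]; ring]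
  exact div_self (dPt_pos ha i').ne'

variable {I₀ : Finset (Fin k)} {J₀ : Finset (Fin ℓ)}

lemma csum_J (ha : IsTransfMatrix a)
    (hinv : ∀ i j, ((i ∈ I₀ ∧ j ∉ J₀) ∨ (i ∉ I₀ ∧ j ∈ J₀)) → a i j = 0) (i' : Fin k) :
    ∑ j ∈ J₀, a i' j / (pP a ((i' : ℕ) + 1) - pP a (i' : ℕ)) = if i' ∈ I₀ then 1 else 0 := by
  by_cases hi' : i' ∈ I₀
  · rw [if_pos hi']
    rw [Finset.sum_subset (Finset.subset_univ J₀)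
      (fun j _ hj => by rw [hinv i' j (Or.inl ⟨hi', hj⟩), zero_div])]
    exact csum_all ha i'
  · rw [if_neg hi']
    exact Finset.sum_eq_zero fun j hj => by rw [hinv i' j (Or.inr ⟨hi', hj⟩), zero_div]

lemma inner_sum_ite (ha : IsTransfMatrix a)
    (hinv : ∀ i j, ((i ∈ I₀ ∧ j ∉ J₀) ∨ (i ∉ I₀ ∧ j ∈ J₀)) → a i j = 0) (i' : Fin k)
    (b b' : ℝ) :
    ∑ j, (a i' j / (pP a ((i' : ℕ) + 1) - pP a (i' : ℕ))) * (if j ∈ J₀ then b else b')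
      = if i' ∈ I₀ then b else b' := by
  rw [← Finset.sum_add_sum_compl J₀]
  have h1 : ∑ j ∈ J₀, (a i' j / (pP a ((i' : ℕ) + 1) - pP a (i' : ℕ))) * (if j ∈ J₀ then b else b')
      = (if i' ∈ I₀ then 1 else 0) * b := by
    rw [← csum_J ha hinv i', Finset.sum_mul]
    exact Finset.sum_congr rfl fun j hj => by rw [if_pos hj]
  have h2 : ∑ j ∈ J₀ᶜ, (a i' j / (pP a ((i' : ℕ) + 1) - pP a (i' : ℕ)))
        * (if j ∈ J₀ then b else b')
      = (1 - (if i' ∈ I₀ then 1 else 0)) * b' := by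
    have hc : ∑ j ∈ J₀ᶜ, a i' j / (pP a ((i' : ℕ) + 1) - pP a (i' : ℕ))
        = 1 - (if i' ∈ I₀ then 1 else 0) := by
      have := Finset.sum_add_sum_compl J₀
        (fun j => a i' j / (pP a ((i' : ℕ) + 1) - pP a (i' : ℕ)))
      rw [csum_all ha i', csum_J ha hinv i'] at this
      linarith
    rw [← hc, Finset.sum_mul]
    refine Finset.sum_congr rfl fun j hj => ?_
    rw [if_neg (Finset.mem_compl.mp hj)]
  rw [h1, h2]
  by_cases hi' : i' ∈ I₀ <;> simp [hi']

lemma eq_zero_of_sum_ite {n : ℕ} {P : Fin n → Prop} [DecidablePred P] {c : ℝ}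
    (h : ∑ i' : Fin n, (if P i' then c else 0) = 0) (hex : ∃ i', P i') : c = 0 := by
  rw [Finset.sum_ite, Finset.sum_const, Finset.sum_const_zero, add_zero, nsmul_eq_mul] at h
  rcases mul_eq_zero.mp h with h0 | h0
  · exfalso
    obtain ⟨i', hi'⟩ := hex
    have hmem : i' ∈ Finset.univ.filter P := Finset.mem_filter.mpr ⟨Finset.mem_univ _, hi'⟩
    have := Finset.card_eq_zero.mp (Nat.cast_eq_zero.mp h0)
    rw [this] at hmem
    exact absurd hmem (Finset.notMem_empty i')
  · exact h0

variable {T T' : Lp ℝ 1 (volume : Measure I) →L[ℝ] Lp ℝ 1 (volume : Measure I)}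

/-- The junk constant appearing in the block identity. -/
def Kjunk {k : ℕ} (I₀ : Finset (Fin k)) (wa0 wb0 wa1 wb1 : ℝ) (i : Fin k) : ℝ :=
  ∑ i' : Fin k, (if (i : ℕ) < (i' : ℕ) then (if i' ∈ I₀ then wa0 else wb0)
    else if (i' : ℕ) < (i : ℕ) then (if i' ∈ I₀ then wa1 else wb1) else 0)

lemma Kjunk_k1 (hk1 : k = 1) (I₀ : Finset (Fin k)) (wa0 wb0 wa1 wb1 : ℝ) (i : Fin k) :
    Kjunk I₀ wa0 wb0 wa1 wb1 i = 0 :=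
  Finset.sum_eq_zero fun i' _ => by
    have h1 := i.isLt
    have h2 := i'.isLt
    rw [if_neg (by omega), if_neg (by omega)]

lemma Kjunk_zero (I₀ : Finset (Fin k)) (i : Fin k) : Kjunk I₀ 0 0 0 0 i = 0 :=
  Finset.sum_eq_zero fun i' _ => by split_ifs <;> rfl

lemma Kjunk_ends (hk2 : 2 ≤ k) {I₀ : Finset (Fin k)} {c d : ℝ}
    (h : ∀ i, Kjunk I₀ c c d d i = 0) : c = 0 ∧ d = 0 := by
  constructor
  · have h0 := h ⟨0, by omega⟩
    unfold Kjunk at h0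
    have hcg : ∀ i' : Fin k,
        (if ((⟨0, by omega⟩ : Fin k) : ℕ) < (i' : ℕ) then (if i' ∈ I₀ then c else c)
          else if (i' : ℕ) < ((⟨0, by omega⟩ : Fin k) : ℕ) then (if i' ∈ I₀ then d else d)
          else 0)
        = (if 0 < (i' : ℕ) then c else 0) := by
      intro i'
      rw [show ((⟨0, by omega⟩ : Fin k) : ℕ) = 0 from rfl]
      rcases Nat.eq_zero_or_pos (i' : ℕ) with hz | hp
      · rw [if_neg (by omega), if_neg (by omega), if_neg (by omega)]
      · rw [if_pos hp, if_pos hp, ite_self]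
    rw [Finset.sum_congr rfl (fun i' _ => hcg i')] at h0
    exact eq_zero_of_sum_ite h0 ⟨⟨1, by omega⟩, Nat.one_pos⟩
  · have h0 := h ⟨k - 1, by omega⟩
    unfold Kjunk at h0
    have hcg : ∀ i' : Fin k,
        (if ((⟨k - 1, by omega⟩ : Fin k) : ℕ) < (i' : ℕ) then (if i' ∈ I₀ then c else c)
          else if (i' : ℕ) < ((⟨k - 1, by omega⟩ : Fin k) : ℕ) then (if i' ∈ I₀ then d else d)
          else 0)
        = (if (i' : ℕ) < k - 1 then d else 0) := by
      intro i'
      have h2 := i'.isLt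
      rw [show ((⟨k - 1, by omega⟩ : Fin k) : ℕ) = k - 1 from rfl]
      rcases Nat.lt_or_ge (i' : ℕ) (k - 1) with hp | hz
      · rw [if_neg (by omega), if_pos hp, if_pos hp, ite_self]
      · rw [if_neg (by omega), if_neg (by omega), if_neg (by omega)]
    rw [Finset.sum_congr rfl (fun i' _ => hcg i')] at h0
    exact eq_zero_of_sum_ite h0 ⟨⟨0, by omega⟩, show 0 < k - 1 by omega⟩


/-- Specialized block lemma: the patching identity on block `i` for `ψ` whose pullbacks
along `G̃_j` are `ind Wa` (for `j ∈ J₀`) resp. `ind Wb` (for `j ∉ J₀`). -/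
lemma app_blk_ite (ha : IsTransfMatrix a) (hpatch : IsAPatching a T' T)
    (hinv : ∀ i j, ((i ∈ I₀ ∧ j ∉ J₀) ∨ (i ∉ I₀ ∧ j ∈ J₀)) → a i j = 0)
    (ψ : Lp ℝ 1 (volume : Measure I)) (φa φb : Lp ℝ 1 (volume : Measure I))
    {Wa Wb : Set I} (hWa : MeasurableSet Wa) (hWb : MeasurableSet Wb)
    (hTa : T φa = ind Wa) (hTb : T φb = ind Wb)
    (hφ : ∀ j : Fin ℓ, ⇑(if j ∈ J₀ then φa else φb) =ᵐ[volume] fun x => ψ (Gtilde a j x))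
    (i : Fin k) :
    ∀ᵐ x, x ∈ Blk a i → ⇑(T' ψ) x =
      (if i ∈ I₀ then Wa.indicator (fun _ => (1 : ℝ)) (blkMap a i x)
        else Wb.indicator (fun _ => (1 : ℝ)) (blkMap a i x))
      + Kjunk I₀ (⇑(ind Wa) (0 : I)) (⇑(ind Wb) (0 : I))
          (⇑(ind Wa) (1 : I)) (⇑(ind Wb) (1 : I)) i := by
  have hTφ : ∀ j : Fin ℓ, T (if j ∈ J₀ then φa else φb)
      = ind (if j ∈ J₀ then Wa else Wb) := by
    intro j
    by_cases hj : j ∈ J₀ <;> simp [hj, hTa, hTb]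
  have hW : ∀ j : Fin ℓ, ⇑(T (if j ∈ J₀ then φa else φb))
      =ᵐ[volume] (if j ∈ J₀ then Wa else Wb).indicator (fun _ => (1 : ℝ)) := by
    intro j
    rw [hTφ j]
    by_cases hj : j ∈ J₀
    · simpa [hj] using ind_coeFn hWa
    · simpa [hj] using ind_coeFn hWb
  have happ := app_blk ha hpatch ψ _ hφ _ hW i
  filter_upwards [happ] with x hx hxB
  rw [hx hxB]
  congr 1
  · -- main sum
    rw [show (∑ j, (a i j / (pP a ((i : ℕ) + 1) - pP a (i : ℕ)))
          * (if j ∈ J₀ then Wa else Wb).indicator (fun _ => (1 : ℝ)) (blkMap a i x))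
        = ∑ j, (a i j / (pP a ((i : ℕ) + 1) - pP a (i : ℕ)))
          * (if j ∈ J₀ then Wa.indicator (fun _ => (1 : ℝ)) (blkMap a i x)
              else Wb.indicator (fun _ => (1 : ℝ)) (blkMap a i x)) from
      Finset.sum_congr rfl fun j _ => by by_cases hj : j ∈ J₀ <;> simp [hj]]
    exact inner_sum_ite ha hinv i _ _
  · -- junk sum
    unfold Kjunk
    refine Finset.sum_congr rfl fun i' _ => ?_
    have e0 : ∑ j, (a i' j / (pP a ((i' : ℕ) + 1) - pP a (i' : ℕ)))
          * (⇑(T (if j ∈ J₀ then φa else φb)) (0 : I))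
        = if i' ∈ I₀ then ⇑(ind Wa) (0 : I) else ⇑(ind Wb) (0 : I) := by
      rw [show (fun j => (a i' j / (pP a ((i' : ℕ) + 1) - pP a (i' : ℕ)))
            * (⇑(T (if j ∈ J₀ then φa else φb)) (0 : I)))
          = fun j => (a i' j / (pP a ((i' : ℕ) + 1) - pP a (i' : ℕ)))
            * (if j ∈ J₀ then ⇑(ind Wa) (0 : I) else ⇑(ind Wb) (0 : I)) from
        funext fun j => by rw [hTφ j]; by_cases hj : j ∈ J₀ <;> simp [hj]]
      exact inner_sum_ite ha hinv i' _ _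
    have e1 : ∑ j, (a i' j / (pP a ((i' : ℕ) + 1) - pP a (i' : ℕ)))
          * (⇑(T (if j ∈ J₀ then φa else φb)) (1 : I))
        = if i' ∈ I₀ then ⇑(ind Wa) (1 : I) else ⇑(ind Wb) (1 : I) := by
      rw [show (fun j => (a i' j / (pP a ((i' : ℕ) + 1) - pP a (i' : ℕ)))
            * (⇑(T (if j ∈ J₀ then φa else φb)) (1 : I)))
          = fun j => (a i' j / (pP a ((i' : ℕ) + 1) - pP a (i' : ℕ)))
            * (if j ∈ J₀ then ⇑(ind Wa) (1 : I) else ⇑(ind Wb) (1 : I)) from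
        funext fun j => by rw [hTφ j]; by_cases hj : j ∈ J₀ <;> simp [hj]]
      exact inner_sum_ite ha hinv i' _ _
    rw [e0, e1]

end Stmt14


-- ===== chunk 6b =====
namespace Stmt14

variable {k ℓ : ℕ} {a : Fin k → Fin ℓ → ℝ} {J₀ : Finset (Fin ℓ)} {S : Set I}

section MEM
variable (ha : IsTransfMatrix a)
include ha

lemma mem_S'_iff {j : Fin ℓ} (hj : j ∈ J₀) {x : I} (h0 : (x : ℝ) ≠ 0) (h1 : (x : ℝ) ≠ 1) :
    Gtilde a j x ∈ (⋃ j' ∈ J₀, Gtilde a j' '' S) ↔ x ∈ S := by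
  constructor
  · intro hx
    simp only [mem_iUnion, exists_prop] at hx
    obtain ⟨j', hj', hmem⟩ := hx
    rcases gtilde_mem_image_cases ha hmem with ⟨he, hxS⟩ | hc | hc
    · exact hxS
    · exact absurd hc h0
    · exact absurd hc h1
  · intro hx
    simp only [mem_iUnion, exists_prop]
    exact ⟨j, hj, ⟨x, hx, rfl⟩⟩

lemma mem_S'_iff_not {j : Fin ℓ} (hj : j ∉ J₀) {x : I} (h0 : (x : ℝ) ≠ 0)
    (h1 : (x : ℝ) ≠ 1) :
    Gtilde a j x ∈ (⋃ j' ∈ J₀, Gtilde a j' '' S) ↔ x ∈ (∅ : Set I) := by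
  simp only [mem_empty_iff_false, iff_false]
  intro hx
  simp only [mem_iUnion, exists_prop] at hx
  obtain ⟨j', hj', hmem⟩ := hx
  rcases gtilde_mem_image_cases ha hmem with ⟨he, hxS⟩ | hc | hc
  · exact hj (he ▸ hj')
  · exact h0 hc
  · exact h1 hc

lemma mem_S5_iff {j : Fin ℓ} (hj : j ∈ J₀) {x : I} (h0 : (x : ℝ) ≠ 0) (h1 : (x : ℝ) ≠ 1) :
    Gtilde a j x ∈ ((⋃ j' ∈ J₀, Gtilde a j' '' S)
      ∪ ⋃ j' ∈ (J₀ᶜ : Finset (Fin ℓ)), Gtilde a j' '' univ) ↔ x ∈ S := by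
  constructor
  · intro hx
    rcases hx with hx | hx
    · exact (mem_S'_iff ha hj h0 h1).mp hx
    · exfalso
      simp only [mem_iUnion, exists_prop] at hx
      obtain ⟨j', hj', hmem⟩ := hx
      rcases gtilde_mem_image_cases ha hmem with ⟨he, -⟩ | hc | hc
      · exact (Finset.mem_compl.mp (he ▸ hj')) hj
      · exact h0 hc
      · exact h1 hc
  · intro hx
    exact Or.inl ((mem_S'_iff ha hj h0 h1).mpr hx)

lemma mem_S5_iff_not {j : Fin ℓ} (hj : j ∉ J₀) {x : I} :
    Gtilde a j x ∈ ((⋃ j' ∈ J₀, Gtilde a j' '' S)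
      ∪ ⋃ j' ∈ (J₀ᶜ : Finset (Fin ℓ)), Gtilde a j' '' univ) ↔ x ∈ (univ : Set I) := by
  simp only [mem_univ, iff_true]
  refine Or.inr ?_
  simp only [mem_iUnion, exists_prop]
  exact ⟨j, Finset.mem_compl.mpr hj, ⟨x, mem_univ x, rfl⟩⟩

end MEM

end Stmt14


/-- Let `A = [a_{ij}]` be a `k × ℓ` transformation matrix, `T, T'` Markov
operators on `L¹([0,1], λ)` with `T'` the `A`-patching of `T`, and `(I₀, J₀)` an invariant
pair of `A`.  If `S, R ⊆ [0,1]` are Borel sets with `T𝟙_S = 𝟙_R` λ-a.e., then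
`T'𝟙_{S′} = 𝟙_{R′}` λ-a.e., where `S′ = ⋃_{j∈J₀} (q_{j−1} + Δq_j·S)` and
`R′ = ⋃_{i∈I₀} (p_{i−1} + Δp_i·R)` (the affine images under `G̃_j` resp. `F̃_i`). -/
theorem stmt14 {k ℓ : ℕ} (a : Fin k → Fin ℓ → ℝ) (ha : IsTransfMatrix a)
    (T T' : Lp ℝ 1 (volume : Measure I) →L[ℝ] Lp ℝ 1 (volume : Measure I))
    (hT : IsMarkovOperator T) (hT' : IsMarkovOperator T')
    (hpatch : IsAPatching a T' T)
    (I₀ : Finset (Fin k)) (J₀ : Finset (Fin ℓ)) (hIJ : IsInvariantPair a I₀ J₀)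
    (S R : Set I) (hS : MeasurableSet S) (hR : MeasurableSet R)
    (h : T (ind S) = ind R) :
    T' (ind (⋃ j ∈ J₀, Gtilde a j '' S)) = ind (⋃ i ∈ I₀, Ftilde a i '' R) := by
  classical
  obtain ⟨hI₀ne, hJ₀ne, hinv, -⟩ := hIJ
  -- measurability of the patched sets
  have hmS' : MeasurableSet (⋃ j ∈ J₀, Gtilde a j '' S) :=
    MeasurableSet.biUnion (J₀ : Set (Fin ℓ)).to_countable
      (fun j _ => (Stmt14.Gtilde_measurableEmbedding ha j).measurableSet_image' hS)
  have hmR' : MeasurableSet (⋃ i ∈ I₀, Ftilde a i '' R) :=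
    MeasurableSet.biUnion (I₀ : Set (Fin k)).to_countable
      (fun i _ => (Stmt14.Ftilde_measurableEmbedding ha i).measurableSet_image' hR)
  have hmU5 : MeasurableSet (⋃ j ∈ ((J₀ᶜ : Finset (Fin ℓ))), Gtilde a j '' univ) :=
    MeasurableSet.biUnion ((J₀ᶜ : Finset (Fin ℓ)) : Set (Fin ℓ)).to_countable
      (fun j _ =>
        (Stmt14.Gtilde_measurableEmbedding ha j).measurableSet_image' MeasurableSet.univ)
  have hmS5 : MeasurableSet ((⋃ j ∈ J₀, Gtilde a j '' S)
      ∪ ⋃ j ∈ ((J₀ᶜ : Finset (Fin ℓ))), Gtilde a j '' univ) := hmS'.union hmU5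
  have hTe : T (ind (∅ : Set I)) = ind (∅ : Set I) := by rw [Stmt14.ind_empty, map_zero]
  -- the premises on the pullback functions φ_j, for the four applications
  have hφM : ∀ j : Fin ℓ, ⇑(if j ∈ J₀ then ind S else ind (∅ : Set I)) =ᵐ[volume]
      fun x => (ind (⋃ j' ∈ J₀, Gtilde a j' '' S)) (Gtilde a j x) := by
    intro j
    by_cases hj : j ∈ J₀
    · rw [if_pos hj]
      exact Stmt14.phi_premise ha (Stmt14.ind_coeFn hmS') (Stmt14.ind_coeFn hS) j
        (fun x h0 h1 => Stmt14.mem_S'_iff ha hj h0 h1)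
    · rw [if_neg hj]
      exact Stmt14.phi_premise ha (Stmt14.ind_coeFn hmS')
        (Stmt14.ind_coeFn MeasurableSet.empty) j
        (fun x h0 h1 => Stmt14.mem_S'_iff_not ha hj h0 h1)
  have hφ5 : ∀ j : Fin ℓ, ⇑(if j ∈ J₀ then ind S else ind (univ : Set I)) =ᵐ[volume]
      fun x => (ind ((⋃ j' ∈ J₀, Gtilde a j' '' S)
        ∪ ⋃ j' ∈ ((J₀ᶜ : Finset (Fin ℓ))), Gtilde a j' '' univ)) (Gtilde a j x) := by
    intro j
    by_cases hj : j ∈ J₀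
    · rw [if_pos hj]
      exact Stmt14.phi_premise ha (Stmt14.ind_coeFn hmS5) (Stmt14.ind_coeFn hS) j
        (fun x h0 h1 => Stmt14.mem_S5_iff ha hj h0 h1)
    · rw [if_neg hj]
      exact Stmt14.phi_premise ha (Stmt14.ind_coeFn hmS5)
        (Stmt14.ind_coeFn MeasurableSet.univ) j
        (fun x _ _ => Stmt14.mem_S5_iff_not ha hj)
  have hφ1 : ∀ j : Fin ℓ, ⇑(if j ∈ J₀ then ind (univ : Set I) else ind (univ : Set I))
      =ᵐ[volume] fun x => (ind (univ : Set I)) (Gtilde a j x) := by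
    intro j
    rw [ite_self]
    exact Stmt14.phi_premise ha (Stmt14.ind_coeFn MeasurableSet.univ)
      (Stmt14.ind_coeFn MeasurableSet.univ) j (fun x _ _ => by simp)
  have hφ0 : ∀ j : Fin ℓ, ⇑(if j ∈ J₀ then ind (∅ : Set I) else ind (∅ : Set I))
      =ᵐ[volume] fun x => (ind (∅ : Set I)) (Gtilde a j x) := by
    intro j
    rw [ite_self]
    exact Stmt14.phi_premise ha (Stmt14.ind_coeFn MeasurableSet.empty)
      (Stmt14.ind_coeFn MeasurableSet.empty) j (fun x _ _ => Iff.rfl)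
  -- the four block identities
  have hM := Stmt14.app_blk_ite ha hpatch hinv (ind (⋃ j ∈ J₀, Gtilde a j '' S))
    (ind S) (ind (∅ : Set I)) hR MeasurableSet.empty h hTe hφM
  have h5 := Stmt14.app_blk_ite ha hpatch hinv
    (ind ((⋃ j ∈ J₀, Gtilde a j '' S) ∪ ⋃ j ∈ ((J₀ᶜ : Finset (Fin ℓ))), Gtilde a j '' univ))
    (ind S) (ind (univ : Set I)) hR MeasurableSet.univ h hT.map_one hφ5
  have h1b := Stmt14.app_blk_ite ha hpatch hinv (ind (univ : Set I)) (ind (univ : Set I))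
    (ind (univ : Set I)) MeasurableSet.univ MeasurableSet.univ hT.map_one hT.map_one hφ1
  have h0b := Stmt14.app_blk_ite ha hpatch hinv (ind (∅ : Set I)) (ind (∅ : Set I))
    (ind (∅ : Set I)) MeasurableSet.empty MeasurableSet.empty hTe hTe hφ0
  -- coercion facts for T'(ind ∅) and T'(ind univ)
  have hT'0 : ⇑(T' (ind (∅ : Set I))) =ᵐ[volume] fun _ => (0 : ℝ) := by
    rw [Stmt14.ind_empty, map_zero]
    exact Lp.coeFn_zero ℝ 1 (volume : Measure I)
  have hT'1 : ⇑(T' (ind (univ : Set I))) =ᵐ[volume] fun _ => (1 : ℝ) := by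
    rw [hT'.map_one]
    filter_upwards [Stmt14.ind_coeFn (MeasurableSet.univ (α := I))] with x hx
    rw [hx, Set.indicator_univ]
  -- bounds on T'(ind S') and T'(ind S5)
  have hb0M : 0 ≤ᵐ[volume] ⇑(T' (ind (⋃ j ∈ J₀, Gtilde a j '' S))) :=
    hT'.positive _ (Stmt14.ind_nonneg hmS')
  have hb1M : ⇑(T' (ind (⋃ j ∈ J₀, Gtilde a j '' S))) ≤ᵐ[volume] fun _ => (1 : ℝ) :=
    Stmt14.markov_le_one hT' (Stmt14.ind_le_one hmS')
  have hb15 : ⇑(T' (ind ((⋃ j ∈ J₀, Gtilde a j '' S)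
      ∪ ⋃ j ∈ ((J₀ᶜ : Finset (Fin ℓ))), Gtilde a j '' univ))) ≤ᵐ[volume] fun _ => (1 : ℝ) :=
    Stmt14.markov_le_one hT' (Stmt14.ind_le_one hmS5)
  -- the junk constants vanish
  have hK : ∀ i, Stmt14.Kjunk I₀ (⇑(ind R) (0 : I)) (⇑(ind (∅ : Set I)) (0 : I))
      (⇑(ind R) (1 : I)) (⇑(ind (∅ : Set I)) (1 : I)) i = 0 := by
    rcases Nat.lt_or_ge k 2 with hk2 | hk2
    · exact fun i => Stmt14.Kjunk_k1 (by have := Stmt14.k_pos ha; omega) _ _ _ _ _ i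
    · -- z-constants vanish
      have hz : ⇑(ind (∅ : Set I)) (0 : I) = 0 ∧ ⇑(ind (∅ : Set I)) (1 : I) = 0 := by
        refine Stmt14.Kjunk_ends (I₀ := I₀) hk2 (fun i => ?_)
        obtain ⟨x, hxB, hid, h0x⟩ := Stmt14.exists_mem_of_ae (Stmt14.vol_Blk_ne_zero ha i)
          ((h0b i).and hT'0)
        have e := hid hxB
        rw [h0x] at e
        simpa [Set.indicator_empty, ite_self] using e.symm
      -- g-constants vanish
      have hg : ⇑(ind (univ : Set I)) (0 : I) = 0 ∧ ⇑(ind (univ : Set I)) (1 : I) = 0 := by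
        refine Stmt14.Kjunk_ends (I₀ := I₀) hk2 (fun i => ?_)
        obtain ⟨x, hxB, hid, h1x⟩ := Stmt14.exists_mem_of_ae (Stmt14.vol_Blk_ne_zero ha i)
          ((h1b i).and hT'1)
        have e := hid hxB
        rw [h1x] at e
        rw [Set.indicator_univ, ite_self] at e
        beta_reduce at e
        linarith [e]
      rcases eq_or_ne (volume R) 0 with hR0 | hR0
      · have he : ind R = ind (∅ : Set I) := Stmt14.ind_of_null hR hR0
        intro i
        rw [he, hz.1, hz.2]
        exact Stmt14.Kjunk_zero I₀ i
      rcases eq_or_ne (volume Rᶜ) 0 with hRc0 | hRc0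
      · have he : ind R = ind (univ : Set I) := Stmt14.ind_of_conull hR hRc0
        intro i
        rw [he, hz.1, hz.2, hg.1, hg.2]
        exact Stmt14.Kjunk_zero I₀ i
      · -- the interesting case: 0 < λ(R) < 1
        intro i
        rw [hz.1, hz.2]
        by_cases hiI : i ∈ I₀
        · have hE1 : volume {x : I | x ∈ Stmt14.Blk a i ∧ Stmt14.blkMap a i x ∈ R} ≠ 0 := by
            rw [Stmt14.vol_blk_inter ha i R]
            exact mul_ne_zero
              (by simp only [ne_eq, ENNReal.ofReal_eq_zero, not_le]; exact Stmt14.dPt_pos ha i)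
              hR0
          have hE0 : volume {x : I | x ∈ Stmt14.Blk a i ∧ Stmt14.blkMap a i x ∈ Rᶜ} ≠ 0 := by
            rw [Stmt14.vol_blk_inter ha i Rᶜ]
            exact mul_ne_zero
              (by simp only [ne_eq, ENNReal.ofReal_eq_zero, not_le]; exact Stmt14.dPt_pos ha i)
              hRc0
          obtain ⟨x, hxE, hidx, hbx⟩ := Stmt14.exists_mem_of_ae hE1 ((hM i).and hb1M)
          obtain ⟨y, hyE, hidy, hby⟩ := Stmt14.exists_mem_of_ae hE0 ((hM i).and hb0M)
          have e1 := hidx hxE.1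
          rw [if_pos hiI, Set.indicator_of_mem hxE.2, hz.1, hz.2] at e1
          have e0 := hidy hyE.1
          rw [if_pos hiI, Set.indicator_of_notMem hyE.2, hz.1, hz.2] at e0
          have hbx' : ⇑(T' (ind (⋃ j ∈ J₀, Gtilde a j '' S))) x ≤ 1 := hbx
          have hby' : (0 : ℝ) ≤ ⇑(T' (ind (⋃ j ∈ J₀, Gtilde a j '' S))) y := hby
          linarith [e1, e0, hbx', hby']
        · obtain ⟨x, hxB, hidx, hbx⟩ := Stmt14.exists_mem_of_ae (Stmt14.vol_Blk_ne_zero ha i)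
            ((hM i).and hb0M)
          obtain ⟨y, hyB, hidy, hby⟩ := Stmt14.exists_mem_of_ae (Stmt14.vol_Blk_ne_zero ha i)
            ((h5 i).and hb15)
          have e0 := hidx hxB
          rw [if_neg hiI, Set.indicator_empty, hz.1, hz.2] at e0
          have e5 := hidy hyB
          rw [if_neg hiI, Set.indicator_univ, hg.1, hg.2] at e5
          have hbx' : (0 : ℝ) ≤ ⇑(T' (ind (⋃ j ∈ J₀, Gtilde a j '' S))) x := hbx
          have hby' : ⇑(T' (ind ((⋃ j ∈ J₀, Gtilde a j '' S)
              ∪ ⋃ j ∈ ((J₀ᶜ : Finset (Fin ℓ))), Gtilde a j '' univ))) y ≤ 1 := hby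
          simp only [Pi.zero_apply] at e0 e5
          linarith [e0, e5, hbx', hby']
  -- final assembly
  have hfin : ∀ i : Fin k, ∀ᵐ x, x ∈ Stmt14.Blk a i →
      ⇑(T' (ind (⋃ j ∈ J₀, Gtilde a j '' S))) x
        = (⋃ i' ∈ I₀, Ftilde a i' '' R).indicator (fun _ => (1 : ℝ)) x := by
    intro i
    filter_upwards [hM i] with x hx hxB
    rw [hx hxB, hK i, add_zero]
    by_cases hiI : i ∈ I₀
    · rw [if_pos hiI]
      by_cases hmem : Stmt14.blkMap a i x ∈ R
      · have hmem' : x ∈ ⋃ i' ∈ I₀, Ftilde a i' '' R := by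
          simp only [mem_iUnion, exists_prop]
          exact ⟨i, hiI, Stmt14.mem_ftilde_image ha hxB hmem⟩
        rw [Set.indicator_of_mem hmem, Set.indicator_of_mem hmem']
      · have hmem' : x ∉ ⋃ i' ∈ I₀, Ftilde a i' '' R := by
          intro hc
          simp only [mem_iUnion, exists_prop] at hc
          obtain ⟨i'', hi'', hmem''⟩ := hc
          exact hmem (Stmt14.ftilde_mem_image_cases ha hxB hmem'').2
        rw [Set.indicator_of_notMem hmem, Set.indicator_of_notMem hmem']
    · have hmem' : x ∉ ⋃ i' ∈ I₀, Ftilde a i' '' R := by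
        intro hc
        simp only [mem_iUnion, exists_prop] at hc
        obtain ⟨i'', hi'', hmem''⟩ := hc
        exact hiI ((Stmt14.ftilde_mem_image_cases ha hxB hmem'').1 ▸ hi'')
      rw [if_neg hiI, Set.indicator_empty, Set.indicator_of_notMem hmem']
  refine Lp.ext (Filter.EventuallyEq.trans ?_ (Stmt14.ind_coeFn hmR').symm)
  filter_upwards [Stmt14.ae_mem_blk ha, (ae_all_iff).mpr hfin] with x hxc hall
  obtain ⟨i, hxB⟩ := hxc
  exact hall i hxB
end
end
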